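/- arXiv:1401.5368 — 5 statements merged into one kernel-verified Lean document; each statement's English description precedes it below -/
import Mathlib

section
/- (Jacobi triple product in theta form) For 0 < |q| < 1 and w ≠ 0, (q; q)_∞ · θ(w; q) = ∑_{k=-∞}^∞ (-1)^k q^{k(k-1)/2} w^k. -/
open Finset

noncomputable def jtpFq (q : ℂ) (n : ℕ) : ℂ := ∏ i ∈ Finset.range n, (1 - q ^ (i + 1))

noncomputable def jtpQb (q : ℂ) (n m : ℕ) : ℂ :=
  if m ≤ n then jtpFq q n / (jtpFq q m * jtpFq q (n - m)) else 0

lemma jtp_one_sub_pow_ne_zero {q : ℂ} (hq1 : ‖q‖ < 1) (i : ℕ) :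
    (1 : ℂ) - q ^ (i + 1) ≠ 0 := by
  intro h
  have h1 : q ^ (i + 1) = 1 := by linear_combination -h
  have := congrArg norm h1
  rw [norm_pow, norm_one] at this
  have hlt : ‖q‖ ^ (i + 1) < 1 :=
    pow_lt_one₀ (norm_nonneg q) hq1 (Nat.succ_ne_zero i)
  rw [this] at hlt; exact lt_irrefl 1 hlt

lemma jtpFq_ne_zero {q : ℂ} (hq1 : ‖q‖ < 1) (n : ℕ) : jtpFq q n ≠ 0 := by
  exact Finset.prod_ne_zero_iff.2 fun i _ => jtp_one_sub_pow_ne_zero hq1 i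

lemma jtpFq_succ (q : ℂ) (n : ℕ) : jtpFq q (n + 1) = jtpFq q n * (1 - q ^ (n + 1)) :=
  Finset.prod_range_succ _ n

lemma jtpQb_zero {q : ℂ} (hq1 : ‖q‖ < 1) (n : ℕ) : jtpQb q n 0 = 1 := by
  have h0 : jtpFq q 0 = 1 := by simp [jtpFq]
  simp [jtpQb, h0, div_self (jtpFq_ne_zero hq1 n)]

lemma jtpQb_self {q : ℂ} (hq1 : ‖q‖ < 1) (n : ℕ) : jtpQb q n n = 1 := by
  have h0 : jtpFq q 0 = 1 := by simp [jtpFq]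
  simp [jtpQb, Nat.sub_self, h0, div_self (jtpFq_ne_zero hq1 n)]

lemma jtpQb_of_gt (q : ℂ) {n m : ℕ} (h : n < m) : jtpQb q n m = 0 := by
  simp [jtpQb, Nat.not_le.2 h]

lemma jtpQb_pascal {q : ℂ} (hq1 : ‖q‖ < 1) (n m : ℕ) :
    jtpQb q (n + 1) (m + 1) = jtpQb q n (m + 1) + q ^ (n - m) * jtpQb q n m := by
  rcases lt_trichotomy n m with h | rfl | h
  · rw [jtpQb_of_gt q (by omega), jtpQb_of_gt q (by omega), jtpQb_of_gt q (by omega)]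
    ring
  · rw [jtpQb_self hq1, jtpQb_self hq1, jtpQb_of_gt q (by omega), Nat.sub_self]
    ring
  · -- m + 1 ≤ n
    obtain ⟨d, rfl⟩ : ∃ d, n = m + 1 + d := ⟨n - (m+1), by omega⟩
    have e1 : m + 1 + d - (m + 1) = d := by omega
    have e2 : m + 1 + d - m = d + 1 := by omega
    have e3 : m + 1 + d + 1 - (m + 1) = d + 1 := by omega
    have hle1 : m + 1 ≤ m + 1 + d + 1 := by omega
    have hle2 : m + 1 ≤ m + 1 + d := by omega
    have hle3 : m ≤ m + 1 + d := by omega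
    rw [jtpQb, jtpQb, jtpQb, if_pos hle1, if_pos hle2, if_pos hle3, e1, e2, e3]
    have hfm : jtpFq q m ≠ 0 := jtpFq_ne_zero hq1 m
    have hfm1 : jtpFq q (m + 1) ≠ 0 := jtpFq_ne_zero hq1 (m + 1)
    have hfd : jtpFq q d ≠ 0 := jtpFq_ne_zero hq1 d
    have hfd1 : jtpFq q (d + 1) ≠ 0 := jtpFq_ne_zero hq1 (d + 1)
    rw [jtpFq_succ q (m + 1 + d), jtpFq_succ q d, jtpFq_succ q m]
    have hA := jtp_one_sub_pow_ne_zero hq1 m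
    have hB := jtp_one_sub_pow_ne_zero hq1 d
    have hC := jtp_one_sub_pow_ne_zero hq1 (m + 1 + d)
    field_simp
    ring

lemma jtp_qbinom {q : ℂ} (hq1 : ‖q‖ < 1) (z : ℂ) (n : ℕ) :
    ∏ j ∈ Finset.range n, (1 + z * q ^ j)
      = ∑ m ∈ Finset.range (n + 1), q ^ (m * (m - 1) / 2) * jtpQb q n m * z ^ m := by
  induction n with
  | zero => simp [jtpQb_zero hq1]
  | succ n ih =>
    have step : ∀ m ∈ Finset.range (n + 1),
        q ^ ((m+1) * ((m+1) - 1) / 2) * jtpQb q (n+1) (m+1) * z ^ (m+1)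
          = q ^ ((m+1) * ((m+1) - 1) / 2) * jtpQb q n (m+1) * z ^ (m+1)
            + (q ^ (m * (m - 1) / 2) * jtpQb q n m * z ^ m) * (z * q ^ n) := by
      intro m hm
      have hm' : m ≤ n := Nat.lt_succ_iff.mp (Finset.mem_range.mp hm)
      rw [jtpQb_pascal hq1]
      have hexp : q ^ ((m+1) * ((m+1) - 1) / 2) * q ^ (n - m)
          = q ^ (m * (m - 1) / 2) * q ^ n := by
        rw [← pow_add, ← pow_add]; congr 1
        have h2 : (m+1) * ((m+1) - 1) = m * (m - 1) + 2 * m := by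
          cases m with
          | zero => rfl
          | succ m' => simp [Nat.succ_sub_one]; ring
        omega
      linear_combination (jtpQb q n m * z ^ (m + 1)) * hexp
    have key : ∑ m ∈ Finset.range (n + 1 + 1), q ^ (m * (m - 1) / 2) * jtpQb q (n+1) m * z ^ m
        = (∑ m ∈ Finset.range (n + 1), q ^ (m * (m - 1) / 2) * jtpQb q n m * z ^ m)
            * (1 + z * q ^ n) := by
      rw [Finset.sum_range_succ']
      rw [Finset.sum_congr rfl step, Finset.sum_add_distrib, ← Finset.sum_mul]
      have hA : ∑ m ∈ Finset.range (n + 1),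
          q ^ ((m+1) * ((m+1) - 1) / 2) * jtpQb q n (m+1) * z ^ (m+1)
            + q ^ (0 * (0 - 1) / 2) * jtpQb q (n+1) 0 * z ^ 0
          = ∑ m ∈ Finset.range (n + 1), q ^ (m * (m - 1) / 2) * jtpQb q n m * z ^ m := by
        rw [jtpQb_zero hq1]
        have := Finset.sum_range_succ' (fun m => q ^ (m * (m - 1) / 2) * jtpQb q n m * z ^ m) (n+1)
        rw [Finset.sum_range_succ] at this
        rw [jtpQb_of_gt q (Nat.lt_succ_self n)] at this
        simp only [mul_zero, zero_mul, add_zero] at this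
        rw [this]; simp [jtpQb_zero hq1]
      rw [add_right_comm, hA]
      ring
    rw [Finset.prod_range_succ, ih, key]

lemma jtp_int_exp (N m : ℕ) (hm : m ≤ 2 * N) :
    ((∑ j ∈ Finset.range N, (N - j) : ℕ) : ℤ) + (m * (m - 1) / 2 : ℕ) - N * m
      = ((m : ℤ) - N) * (((m : ℤ) - N) - 1) / 2 := by
  have hS : (∑ j ∈ Finset.range N, (N - j) : ℕ) * 2 = N * (N + 1) := by
    rw [← Finset.sum_range_reflect]
    have : ∀ j ∈ Finset.range N, N - (N - 1 - j) = j + 1 := fun j hj => by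
      have := Finset.mem_range.mp hj; omega
    rw [Finset.sum_congr rfl this]
    have g := Finset.sum_range_id_mul_two N
    have hsum : ∑ j ∈ Finset.range N, (j + 1) = (∑ j ∈ Finset.range N, j) + N := by
      rw [Finset.sum_add_distrib]; simp
    rw [hsum, Nat.add_mul, g]
    cases N with
    | zero => rfl
    | succ n => simp [Nat.succ_sub_one]; ring
  have h2e : (m * (m - 1) / 2 : ℕ) * 2 = m * (m - 1) := by
    rcases Nat.even_or_odd m with he | ho
    · exact Nat.div_mul_cancel (Dvd.dvd.mul_right he.two_dvd _)
    · refine Nat.div_mul_cancel (Dvd.dvd.mul_left ?_ _)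
      obtain ⟨c, hc⟩ := ho; exact ⟨c, by omega⟩
  have hdvd : (2 : ℤ) ∣ ((m : ℤ) - N) * (((m : ℤ) - N) - 1) := by
    rcases Int.even_or_odd ((m : ℤ) - N) with he | ho
    · exact Dvd.dvd.mul_right he.two_dvd _
    · refine Dvd.dvd.mul_left ?_ _
      obtain ⟨c, hc⟩ := ho; exact ⟨c, by omega⟩
  have h2k : ((m : ℤ) - N) * (((m : ℤ) - N) - 1) / 2 * 2
      = ((m : ℤ) - N) * (((m : ℤ) - N) - 1) := Int.ediv_mul_cancel hdvd
  have hlin : 2 * (((∑ j ∈ Finset.range N, (N - j) : ℕ) : ℤ) + (m * (m - 1) / 2 : ℕ) - N * m)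
      = ((m : ℤ) - N) * (((m : ℤ) - N) - 1) := by
    have c1 : ((∑ j ∈ Finset.range N, (N - j) : ℕ) : ℤ) * 2 = (N : ℤ) * (N + 1) := by
      exact_mod_cast congrArg (Nat.cast : ℕ → ℤ) hS
    have c2 : ((m * (m - 1) / 2 : ℕ) : ℤ) * 2 = (m : ℤ) * ((m : ℤ) - 1) := by
      cases m with
      | zero => simp
      | succ m' =>
        have h3 := congrArg (Nat.cast : ℕ → ℤ) h2e
        push_cast [Nat.succ_sub_one] at h3 ⊢
        linear_combination h3
    linear_combination c1 + c2
  omega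

lemma jtp_finite {q v : ℂ} (hq0 : q ≠ 0) (hq1 : ‖q‖ < 1) (hv : v ≠ 0) (N : ℕ) :
    (∏ j ∈ Finset.range N, (1 + q ^ j * v)) * (∏ j ∈ Finset.range N, (1 + q ^ (j+1) * v⁻¹))
      = ∑ k ∈ Finset.Icc (-(N : ℤ)) (N : ℤ),
          q ^ (k * (k - 1) / 2) * jtpQb q (2 * N) (k + N).toNat * v ^ k := by
  set u := v * (q ^ N)⁻¹ with hu
  have hqN : q ^ N ≠ 0 := pow_ne_zero _ hq0
  set S := ∑ j ∈ Finset.range N, (N - j) with hSdef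
  have hb := jtp_qbinom hq1 u (2 * N)
  have hsplit : ∏ j ∈ Finset.range (2 * N), (1 + u * q ^ j)
      = (∏ j ∈ Finset.range N, (1 + u * q ^ j)) * ∏ j ∈ Finset.range N, (1 + q ^ j * v) := by
    rw [two_mul, Finset.prod_range_add]
    congr 1
    refine Finset.prod_congr rfl fun j hj => ?_
    rw [hu, pow_add]
    field_simp
  have hB : ∏ j ∈ Finset.range N, (1 + q ^ (j + 1) * v⁻¹)
      = q ^ S * (v⁻¹) ^ N * ∏ j ∈ Finset.range N, (1 + u * q ^ j) := by
    have hvN : (v⁻¹) ^ N = ∏ _j ∈ Finset.range N, v⁻¹ := by simp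
    rw [hSdef, ← Finset.prod_pow_eq_pow_sum, hvN,
      ← Finset.prod_mul_distrib, ← Finset.prod_mul_distrib]
    rw [← Finset.prod_range_reflect]
    refine Finset.prod_congr rfl fun j hj => ?_
    have hjN : j < N := Finset.mem_range.mp hj
    have e1 : N - 1 - j + 1 = N - j := by omega
    have e2 : N - j + j = N := by omega
    rw [e1, hu]
    have : q ^ (N - j) * v⁻¹ * (1 + v * (q ^ N)⁻¹ * q ^ j) = 1 + q ^ (N - j) * v⁻¹ := by
      have h3 : q ^ (N - j) * q ^ j = q ^ N := by rw [← pow_add, e2]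
      field_simp
      linear_combination v * h3
    rw [this]
  have hterm : ∀ m ∈ Finset.range (2 * N + 1),
      q ^ S * (v⁻¹) ^ N * (q ^ (m * (m - 1) / 2) * jtpQb q (2 * N) m * u ^ m)
        = q ^ ((((m : ℤ) - N)) * ((((m : ℤ) - N)) - 1) / 2)
            * jtpQb q (2 * N) (((m : ℤ) - N) + N).toNat * v ^ ((m : ℤ) - N) := by
    intro m hm
    have hm' : m ≤ 2 * N := Nat.lt_succ_iff.mp (Finset.mem_range.mp hm)
    have ht : (((m : ℤ) - N) + N).toNat = m := by omega
    have hexp : (((m : ℤ) - N)) * ((((m : ℤ) - N)) - 1) / 2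
        = ((S + m * (m - 1) / 2 : ℕ) : ℤ) - ((N * m : ℕ) : ℤ) := by
      have hc : ((S + m * (m - 1) / 2 : ℕ) : ℤ) - ((N * m : ℕ) : ℤ)
          = ((S : ℕ) : ℤ) + ((m * (m - 1) / 2 : ℕ) : ℤ) - (N : ℤ) * (m : ℤ) := by
        push_cast; ring
      rw [hc, hSdef]
      exact (jtp_int_exp N m hm').symm
    rw [ht, hexp, zpow_sub₀ hq0, zpow_natCast, zpow_natCast]
    have hvz : v ^ ((m : ℤ) - (N : ℤ)) = v ^ m / v ^ N := by
      rw [zpow_sub₀ hv, zpow_natCast, zpow_natCast]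
    rw [hvz, hu, mul_pow]
    have h5 : ((q ^ N)⁻¹ : ℂ) ^ m = (q ^ (N * m))⁻¹ := by rw [inv_pow, ← pow_mul]
    rw [h5]
    field_simp
    have hvN' : v ^ N * v⁻¹ ^ N = 1 := by rw [← mul_pow, mul_inv_cancel₀ hv, one_pow]
    linear_combination (q ^ S * q ^ (m * (m - 1) / 2) * jtpQb q (2 * N) m) * hvN'
  calc (∏ j ∈ Finset.range N, (1 + q ^ j * v)) * (∏ j ∈ Finset.range N, (1 + q ^ (j+1) * v⁻¹))
      = q ^ S * (v⁻¹) ^ N * ((∏ j ∈ Finset.range N, (1 + u * q ^ j))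
          * ∏ j ∈ Finset.range N, (1 + q ^ j * v)) := by rw [hB]; ring
    _ = q ^ S * (v⁻¹) ^ N
          * ∑ m ∈ Finset.range (2 * N + 1), q ^ (m * (m - 1) / 2) * jtpQb q (2 * N) m * u ^ m := by
        rw [← hsplit, hb]
    _ = ∑ m ∈ Finset.range (2 * N + 1),
          q ^ S * (v⁻¹) ^ N * (q ^ (m * (m - 1) / 2) * jtpQb q (2 * N) m * u ^ m) := by
        rw [Finset.mul_sum]
    _ = ∑ k ∈ Finset.Icc (-(N : ℤ)) (N : ℤ),
          q ^ (k * (k - 1) / 2) * jtpQb q (2 * N) (k + N).toNat * v ^ k := by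
        refine Finset.sum_nbij' (fun m => (m : ℤ) - N) (fun k => (k + N).toNat) ?_ ?_ ?_ ?_ hterm
        · intro a ha
          have := Finset.mem_range.mp ha
          rw [Finset.mem_Icc]; beta_reduce; omega
        · intro k hk
          have := Finset.mem_Icc.mp hk
          rw [Finset.mem_range]; beta_reduce; omega
        · intro a ha; beta_reduce; omega
        · intro k hk
          have := Finset.mem_Icc.mp hk
          beta_reduce; omega

open Filter Topology

lemma jtp_multipliable_one_add (f : ℕ → ℂ) (hf : Summable f) :
    Multipliable (fun n => 1 + f n) := by
  by_cases hz : ∃ n, (1 : ℂ) + f n = 0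
  · obtain ⟨n₀, hn₀⟩ := hz
    refine ⟨0, ?_⟩
    rw [HasProd]
    refine Filter.Tendsto.congr' ?_ tendsto_const_nhds
    filter_upwards [Filter.eventually_ge_atTop ({n₀} : Finset ℕ)] with s hs
    exact (Finset.prod_eq_zero (hs (Finset.mem_singleton_self n₀)) hn₀).symm
  · push_neg at hz
    exact Complex.multipliable_one_add_of_summable hf

lemma jtp_norm_summable (f : ℕ → ℂ) (c : ℕ → ℂ) (h : ∀ n, f (n + 1) = f n * c n)
    (hc : Tendsto c atTop (𝓝 0)) : Summable (fun n => ‖f n‖) := by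
  refine summable_of_ratio_norm_eventually_le (r := 1/2) (by norm_num) ?_
  have hev : ∀ᶠ n in atTop, ‖c n‖ ≤ 1/2 := by
    have := hc.norm
    simp only [norm_zero] at this
    exact this.eventually_le_const (by norm_num)
  filter_upwards [hev] with n hn
  rw [Real.norm_of_nonneg (norm_nonneg _), Real.norm_of_nonneg (norm_nonneg _),
    h n, norm_mul]
  calc ‖f n‖ * ‖c n‖ ≤ ‖f n‖ * (1/2) := by
        exact mul_le_mul_of_nonneg_left hn (norm_nonneg _)
    _ = 1/2 * ‖f n‖ := by ring

lemma jtp_exp_neg_le_one_sub {x r : ℝ} (hx : 0 ≤ x) (hxr : x ≤ r) (hr : r < 1) :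
    Real.exp (-(x / (1 - r))) ≤ 1 - x := by
  have hr1 : 0 < 1 - r := by linarith
  have hx1 : 0 < 1 - x := by linarith
  have h1 : 1 + x / (1 - r) ≤ Real.exp (x / (1 - r)) := by
    have := Real.add_one_le_exp (x / (1 - r)); linarith
  have h2 : 1 / (1 - x) ≤ 1 + x / (1 - r) := by
    rw [div_le_iff₀ hx1]
    have : x * (r - x) ≥ 0 := mul_nonneg hx (by linarith)
    have hexp : (1 + x / (1 - r)) * (1 - x) = 1 + (x * (r - x)) / (1 - r) := by
      field_simp
      ring
    rw [hexp]
    have : 0 ≤ (x * (r - x)) / (1 - r) := div_nonneg this (le_of_lt hr1)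
    linarith
  have h3 : 1 / (1 - x) ≤ Real.exp (x / (1 - r)) := le_trans h2 h1
  rw [Real.exp_neg, inv_le_comm₀ (Real.exp_pos _) hx1]
  calc (1 - x)⁻¹ = 1 / (1 - x) := (one_div _).symm
    _ ≤ Real.exp (x / (1 - r)) := h3

lemma jtp_geom_partial {r : ℝ} (hr0 : 0 ≤ r) (hr1 : r < 1) (n : ℕ) :
    ∑ i ∈ Finset.range n, r ^ (i + 1) ≤ r / (1 - r) := by
  have hsum : ∑ i ∈ Finset.range n, r ^ (i + 1) = r * ∑ i ∈ Finset.range n, r ^ i := by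
    rw [Finset.mul_sum]
    exact Finset.sum_congr rfl fun i _ => by rw [pow_succ']
  rw [hsum, div_eq_mul_inv]
  refine mul_le_mul_of_nonneg_left ?_ hr0
  have h1 : ∑ i ∈ Finset.range n, r ^ i ≤ ∑' i : ℕ, r ^ i :=
    Summable.sum_le_tsum _ (fun i _ => pow_nonneg hr0 i) (summable_geometric_of_lt_one hr0 hr1)
  rwa [tsum_geometric_of_lt_one hr0 hr1] at h1

lemma jtpFq_norm_le {q : ℂ} (hq1 : ‖q‖ < 1) (n : ℕ) :
    ‖jtpFq q n‖ ≤ Real.exp (‖q‖ / (1 - ‖q‖)) := by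
  set r := ‖q‖ with hr
  have hr0 : 0 ≤ r := norm_nonneg q
  calc ‖jtpFq q n‖ = ∏ i ∈ Finset.range n, ‖1 - q ^ (i + 1)‖ := norm_prod _ _
    _ ≤ ∏ i ∈ Finset.range n, Real.exp (r ^ (i + 1)) := by
        refine Finset.prod_le_prod (fun i _ => norm_nonneg _) (fun i _ => ?_)
        calc ‖1 - q ^ (i + 1)‖ ≤ ‖(1 : ℂ)‖ + ‖q ^ (i + 1)‖ := norm_sub_le _ _
          _ = 1 + r ^ (i + 1) := by rw [norm_one, norm_pow]
          _ ≤ Real.exp (r ^ (i + 1)) := by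
              have := Real.add_one_le_exp (r ^ (i + 1)); linarith
    _ = Real.exp (∑ i ∈ Finset.range n, r ^ (i + 1)) := (Real.exp_sum _ _).symm
    _ ≤ Real.exp (r / (1 - r)) := Real.exp_le_exp.2 (jtp_geom_partial hr0 hq1 n)

lemma jtpFq_norm_ge {q : ℂ} (hq1 : ‖q‖ < 1) (n : ℕ) :
    Real.exp (-(‖q‖ / ((1 - ‖q‖) ^ 2))) ≤ ‖jtpFq q n‖ := by
  set r := ‖q‖ with hr
  have hr0 : 0 ≤ r := norm_nonneg q
  have hr1 : 0 < 1 - r := by linarith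
  calc Real.exp (-(r / ((1 - r) ^ 2)))
      ≤ Real.exp (-(∑ i ∈ Finset.range n, r ^ (i + 1)) / (1 - r)) := by
        refine Real.exp_le_exp.2 ?_
        rw [neg_div]
        refine neg_le_neg ?_
        rw [div_le_div_iff₀ hr1 (by positivity)]
        have h1 := jtp_geom_partial hr0 hq1 n
        calc (∑ i ∈ Finset.range n, r ^ (i + 1)) * (1 - r) ^ 2
            ≤ (r / (1 - r)) * (1 - r) ^ 2 := by
              exact mul_le_mul_of_nonneg_right h1 (by positivity)
          _ = r * (1 - r) := by field_simp
    _ = ∏ i ∈ Finset.range n, Real.exp (-(r ^ (i + 1) / (1 - r))) := by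
        rw [← Real.exp_sum]
        congr 1
        rw [← Finset.sum_neg_distrib, Finset.sum_div]
        exact Finset.sum_congr rfl fun i _ => neg_div _ _
    _ ≤ ∏ i ∈ Finset.range n, ‖1 - q ^ (i + 1)‖ := by
        refine Finset.prod_le_prod (fun i _ => le_of_lt (Real.exp_pos _)) (fun i _ => ?_)
        have hpow : r ^ (i + 1) ≤ r := by
          calc r ^ (i + 1) ≤ r ^ 1 := pow_le_pow_of_le_one hr0 (le_of_lt hq1) (by omega)
            _ = r := pow_one r
        calc Real.exp (-(r ^ (i + 1) / (1 - r))) ≤ 1 - r ^ (i + 1) :=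
              jtp_exp_neg_le_one_sub (pow_nonneg hr0 _) hpow hq1
          _ ≤ ‖1 - q ^ (i + 1)‖ := by
              have h2 : ‖(1 : ℂ)‖ - ‖q ^ (i + 1)‖ ≤ ‖1 - q ^ (i + 1)‖ := norm_sub_norm_le _ _
              rw [norm_one, norm_pow] at h2
              exact h2
    _ = ‖jtpFq q n‖ := (norm_prod _ _).symm

lemma jtpQb_norm_le {q : ℂ} (hq1 : ‖q‖ < 1) (n m : ℕ) :
    ‖jtpQb q n m‖ ≤ Real.exp (‖q‖ / (1 - ‖q‖))
      / Real.exp (-(‖q‖ / ((1 - ‖q‖) ^ 2))) ^ 2 := by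
  by_cases h : m ≤ n
  · rw [jtpQb, if_pos h, norm_div, norm_mul]
    refine div_le_div₀ (le_of_lt (Real.exp_pos _)) (jtpFq_norm_le hq1 n) (by positivity) ?_
    calc Real.exp (-(‖q‖ / ((1 - ‖q‖) ^ 2))) ^ 2
        = Real.exp (-(‖q‖ / ((1 - ‖q‖) ^ 2)))
          * Real.exp (-(‖q‖ / ((1 - ‖q‖) ^ 2))) := sq _
      _ ≤ ‖jtpFq q m‖ * ‖jtpFq q (n - m)‖ :=
          mul_le_mul (jtpFq_norm_ge hq1 m) (jtpFq_norm_ge hq1 (n - m))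
            (le_of_lt (Real.exp_pos _)) (norm_nonneg _)
  · rw [jtpQb, if_neg h, norm_zero]; positivity

lemma jtp_K_succ (k : ℤ) : (k + 1) * ((k + 1) - 1) / 2 = k * (k - 1) / 2 + k := by
  obtain ⟨a, ha⟩ := Int.even_mul_succ_self (k - 1)
  have h1 : k * (k - 1) = 2 * a := by linear_combination ha
  have h2 : (k + 1) * ((k + 1) - 1) = 2 * (a + k) := by linear_combination ha
  rw [h1, h2, Int.mul_ediv_cancel_left _ (by norm_num), Int.mul_ediv_cancel_left _ (by norm_num)]

noncomputable def theta (q w : ℂ) : ℂ := ∏' j : ℕ, (1 - q ^ j * w) * (1 - q ^ (j + 1) * w⁻¹)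

theorem jacobi_triple_product_theta (q w : ℂ) (hq0 : 0 < ‖q‖)
    (hq1 : ‖q‖ < 1) (hw : w ≠ 0) :
    (∏' j : ℕ, (1 - q ^ (j + 1))) * theta q w
      = ∑' k : ℤ, (-1 : ℂ) ^ k * q ^ (k * (k - 1) / 2) * w ^ k := by
  have hq0' : q ≠ 0 := by
    intro h; rw [h, norm_zero] at hq0; exact lt_irrefl 0 hq0
  set v : ℂ := -w with hvdef
  have hv : v ≠ 0 := neg_ne_zero.2 hw
  set P : ℂ := ∏' j : ℕ, (1 - q ^ (j + 1)) with hPdef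
  set K : ℝ := Real.exp (‖q‖ / (1 - ‖q‖))
      / Real.exp (-(‖q‖ / ((1 - ‖q‖) ^ 2))) ^ 2 with hKdef
  have hgeo : Summable (fun j : ℕ => q ^ j) :=
    summable_geometric_of_norm_lt_one (by exact hq1)
  -- multipliability of the Euler product
  have hP : Multipliable (fun j : ℕ => 1 - q ^ (j + 1)) := by
    have h1 : Summable (fun j : ℕ => -(q ^ (j + 1))) := by
      refine (hgeo.mul_left (-q)).congr fun j => ?_
      ring
    refine (jtp_multipliable_one_add _ h1).congr fun j => ?_
    ring
  have htendP : Tendsto (fun n => jtpFq q n) atTop (𝓝 P) := by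
    simpa [jtpFq] using hP.hasProd.tendsto_prod_nat
  have hPnorm : Real.exp (-(‖q‖ / ((1 - ‖q‖) ^ 2))) ≤ ‖P‖ :=
    ge_of_tendsto htendP.norm (Eventually.of_forall fun n => jtpFq_norm_ge hq1 n)
  have hP0 : P ≠ 0 := by
    intro h
    rw [h, norm_zero] at hPnorm
    exact absurd hPnorm (not_le.2 (Real.exp_pos _))
  -- multipliability of the theta product
  have hθ1 : Multipliable (fun j : ℕ => 1 - q ^ j * w) := by
    have h1 : Summable (fun j : ℕ => -w * q ^ j) := hgeo.mul_left (-w)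
    refine (jtp_multipliable_one_add _ h1).congr fun j => ?_
    ring
  have hθ2 : Multipliable (fun j : ℕ => 1 - q ^ (j + 1) * w⁻¹) := by
    have h1 : Summable (fun j : ℕ => -(q * w⁻¹) * q ^ j) := hgeo.mul_left _
    refine (jtp_multipliable_one_add _ h1).congr fun j => ?_
    ring
  have hθ : Multipliable (fun j : ℕ => (1 - q ^ j * w) * (1 - q ^ (j + 1) * w⁻¹)) :=
    hθ1.mul hθ2
  have htendθ : Tendsto (fun N => ∏ j ∈ Finset.range N, ((1 - q ^ j * w) * (1 - q ^ (j + 1) * w⁻¹)))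
      atTop (𝓝 (theta q w)) := hθ.hasProd.tendsto_prod_nat
  -- partial products of theta equal the A·B products
  have hABprod : ∀ N : ℕ, ∏ j ∈ Finset.range N, ((1 - q ^ j * w) * (1 - q ^ (j + 1) * w⁻¹))
      = (∏ j ∈ Finset.range N, (1 + q ^ j * v)) * ∏ j ∈ Finset.range N, (1 + q ^ (j + 1) * v⁻¹) := by
    intro N
    rw [← Finset.prod_mul_distrib]
    refine Finset.prod_congr rfl fun j _ => ?_
    rw [hvdef, inv_neg]
    ring
  -- the summand functions
  set G : ℤ → ℂ := fun k => q ^ (k * (k - 1) / 2) * v ^ k with hGdef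
  set F : ℕ → ℤ → ℂ := fun N k => if k ∈ Finset.Icc (-(N : ℤ)) (N : ℤ)
      then P * (q ^ (k * (k - 1) / 2) * jtpQb q (2 * N) (k + N).toNat * v ^ k) else 0 with hFdef
  have hFsum : ∀ N : ℕ, ∑' k : ℤ, F N k
      = P * ((∏ j ∈ Finset.range N, (1 + q ^ j * v)) * ∏ j ∈ Finset.range N, (1 + q ^ (j + 1) * v⁻¹)) := by
    intro N
    rw [tsum_eq_sum (s := Finset.Icc (-(N : ℤ)) (N : ℤ)) (fun k hk => if_neg hk)]
    rw [jtp_finite hq0' hq1 hv N, Finset.mul_sum]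
    exact Finset.sum_congr rfl fun k hk => if_pos hk
  -- summability of norms of G
  have hGpos : Summable (fun n : ℕ => ‖G (n : ℤ)‖) := by
    refine jtp_norm_summable _ (fun n => q ^ n * v) (fun n => ?_) ?_
    · show q ^ (((n : ℤ) + 1) * (((n : ℤ) + 1) - 1) / 2) * v ^ ((n : ℤ) + 1)
        = q ^ (((n : ℤ)) * (((n : ℤ)) - 1) / 2) * v ^ ((n : ℤ)) * (q ^ n * v)
      rw [jtp_K_succ ((n : ℤ)), zpow_add₀ hq0', zpow_add_one₀ hv, zpow_natCast]
      ring
    · have := (tendsto_pow_atTop_nhds_zero_of_norm_lt_one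
        (hq1 : ‖q‖ < 1)).mul_const v
      simpa using this
  have hGneg : Summable (fun n : ℕ => ‖G (-(n + 1) : ℤ)‖) := by
    refine jtp_norm_summable _ (fun n => q ^ (n + 2) * v⁻¹) (fun n => ?_) ?_
    · show G (-((n : ℤ) + 1 + 1)) = G (-((n : ℤ) + 1)) * (q ^ (n + 2) * v⁻¹)
      have e1 : (-((n : ℤ) + 1 + 1)) * ((-((n : ℤ) + 1 + 1)) - 1) / 2
          = (-((n : ℤ) + 1)) * ((-((n : ℤ) + 1)) - 1) / 2 + ((n : ℤ) + 2) := by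
        have h := jtp_K_succ (-((n : ℤ) + 1 + 1))
        have h2 : (-((n : ℤ) + 1 + 1)) + 1 = -((n : ℤ) + 1) := by ring
        rw [h2] at h
        linarith
      have hb : (-((n : ℤ) + 1 + 1)) = (-((n : ℤ) + 1)) - 1 := by ring
      rw [hGdef]
      beta_reduce
      rw [e1, zpow_add₀ hq0']
      have hv2 : v ^ (-((n : ℤ) + 1 + 1)) = v ^ (-((n : ℤ) + 1)) * v⁻¹ := by
        rw [hb, zpow_sub_one₀ hv]
      rw [hv2]
      have hc : ((n : ℤ) + 2) = ((n + 2 : ℕ) : ℤ) := by push_cast; ring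
      rw [hc, zpow_natCast]
      ring
    · have := (tendsto_pow_atTop_nhds_zero_of_norm_lt_one
        (hq1 : ‖q‖ < 1)).mul_const v⁻¹
      have h2 := this.comp (tendsto_add_atTop_nat 2)
      simpa [Function.comp_def] using h2
  have hGnorm : Summable (fun k : ℤ => ‖G k‖) := by
    refine Summable.of_nat_of_neg_add_one hGpos ?_
    refine hGneg.congr fun n => ?_
    norm_cast
  have hG : Summable G := Summable.of_norm hGnorm
  -- dominated convergence
  have htsum : Tendsto (fun N => ∑' k : ℤ, F N k) atTop (𝓝 (∑' k : ℤ, G k)) := by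
    refine tendsto_tsum_of_dominated_convergence (bound := fun k => (‖P‖ * K) * ‖G k‖)
      (hGnorm.mul_left _) ?_ ?_
    · intro k
      have hev : ∀ᶠ N in atTop, F N k
          = P * (q ^ (k * (k - 1) / 2)
              * (jtpFq q (2 * N) / (jtpFq q ((k + N).toNat) * jtpFq q (2 * N - (k + N).toNat)))
              * v ^ k) := by
        filter_upwards [eventually_ge_atTop k.natAbs] with N hN
        have hmem : k ∈ Finset.Icc (-(N : ℤ)) (N : ℤ) := by
          rw [Finset.mem_Icc]; omega
        rw [hFdef]
        beta_reduce
        rw [if_pos hmem, jtpQb, if_pos (by omega : (k + N).toNat ≤ 2 * N)]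
      have h2N : Tendsto (fun N : ℕ => 2 * N) atTop atTop :=
        tendsto_atTop_mono (fun N => by simp only [id_eq]; omega) tendsto_id
      have hkN : Tendsto (fun N : ℕ => ((k : ℤ) + N).toNat) atTop atTop :=
        tendsto_atTop.2 fun b => eventually_atTop.2 ⟨b + k.natAbs, fun N hN => by omega⟩
      have hk2N : Tendsto (fun N : ℕ => 2 * N - ((k : ℤ) + N).toNat) atTop atTop :=
        tendsto_atTop.2 fun b => eventually_atTop.2 ⟨b + k.natAbs, fun N hN => by omega⟩
      have t1 : Tendsto (fun N : ℕ => jtpFq q (2 * N)) atTop (𝓝 P) := htendP.comp h2N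
      have t2 : Tendsto (fun N : ℕ => jtpFq q (((k : ℤ) + N).toNat)) atTop (𝓝 P) :=
        htendP.comp hkN
      have t3 : Tendsto (fun N : ℕ => jtpFq q (2 * N - ((k : ℤ) + N).toNat)) atTop (𝓝 P) :=
        htendP.comp hk2N
      have tq : Tendsto (fun N : ℕ => jtpFq q (2 * N)
          / (jtpFq q (((k : ℤ) + N).toNat) * jtpFq q (2 * N - ((k : ℤ) + N).toNat)))
          atTop (𝓝 (P / (P * P))) := t1.div (t2.mul t3) (mul_ne_zero hP0 hP0)
      have tfull : Tendsto (fun N : ℕ => P * (q ^ (k * (k - 1) / 2)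
          * (jtpFq q (2 * N) / (jtpFq q ((k + N).toNat) * jtpFq q (2 * N - (k + N).toNat)))
          * v ^ k)) atTop (𝓝 (P * (q ^ (k * (k - 1) / 2) * (P / (P * P)) * v ^ k))) :=
        tendsto_const_nhds.mul ((tendsto_const_nhds.mul tq).mul tendsto_const_nhds)
      have hval : P * (q ^ (k * (k - 1) / 2) * (P / (P * P)) * v ^ k) = G k := by
        rw [hGdef]
        field_simp
      rw [hval] at tfull
      exact tfull.congr' (hev.mono fun N h => h.symm)
    · refine Eventually.of_forall fun N k => ?_
      rw [hFdef]
      beta_reduce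
      by_cases hk : k ∈ Finset.Icc (-(N : ℤ)) (N : ℤ)
      · rw [if_pos hk]
        have h1 : ‖jtpQb q (2 * N) ((k + N).toNat)‖ ≤ K := jtpQb_norm_le hq1 _ _
        have hGk : ‖G k‖ = ‖q ^ (k * (k - 1) / 2)‖ * ‖v ^ k‖ := norm_mul _ _
        rw [norm_mul, norm_mul, norm_mul, hGk]
        calc ‖P‖ * (‖q ^ (k * (k - 1) / 2)‖ * ‖jtpQb q (2 * N) ((k + N).toNat)‖ * ‖v ^ k‖)
            = (‖P‖ * ‖q ^ (k * (k - 1) / 2)‖ * ‖v ^ k‖) * ‖jtpQb q (2 * N) ((k + N).toNat)‖ := by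
              ring
          _ ≤ (‖P‖ * ‖q ^ (k * (k - 1) / 2)‖ * ‖v ^ k‖) * K :=
              mul_le_mul_of_nonneg_left h1 (by positivity)
          _ = ‖P‖ * K * (‖q ^ (k * (k - 1) / 2)‖ * ‖v ^ k‖) := by ring
      · rw [if_neg hk, norm_zero]
        positivity
  -- combine the two limits
  have hAB : Tendsto (fun N => ∑' k : ℤ, F N k) atTop (𝓝 (P * theta q w)) := by
    refine Tendsto.congr (fun N => (hFsum N).symm) ?_
    exact tendsto_const_nhds.mul (htendθ.congr hABprod)
  have hmain : P * theta q w = ∑' k : ℤ, G k := tendsto_nhds_unique hAB htsum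
  rw [hmain]
  refine tsum_congr fun k => ?_
  rw [hGdef]
  beta_reduce
  rw [hvdef, show (-w : ℂ) = (-1) * w by ring, mul_zpow]
  ring
end

section
/- (Addition-formula form) For 0 < |q| < 1 and nonzero complex x, y with θ(x; q) ≠ 0 and θ(y; q) ≠ 0 and θ(-1; q) ≠ 0: y·θ(xy; q)θ(x/y; q)/(θ(x; q)²θ(y; q)²) = f(y) - f(x), where f(x) := θ(-x; q)²/(θ(-1; q)²·θ(x; q)²). -/
open Filter Topology Complex Set Asymptotics

noncomputable def fTheta (q x : ℂ) : ℂ := theta q (-x) ^ 2 / (theta q (-1) ^ 2 * theta q x ^ 2)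

namespace ThetaAux

noncomputable def A (q w : ℂ) : ℂ := ∏' j : ℕ, (1 - q ^ (j + 1) * w)

variable {q y : ℂ}

lemma hasProd_zero_of_eq_zero {f : ℕ → ℂ} {k : ℕ} (h : f k = 0) : HasProd f 0 := by
  rw [HasProd]
  refine tendsto_const_nhds.congr' ?_
  filter_upwards [eventually_ge_atTop ({k} : Finset ℕ)] with s hs
  exact (Finset.prod_eq_zero (hs (Finset.mem_singleton_self k)) h).symm

lemma summable_log (hq1 : ‖q‖ < 1) (w : ℂ) :
    Summable fun j : ℕ => Complex.log (1 - q ^ (j + 1) * w) := by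
  apply Summable.of_norm_bounded_eventually_nat (g := fun j => 3/2 * (‖q‖ ^ (j+1) * ‖w‖))
  · apply Summable.mul_left
    have : Summable fun j : ℕ => ‖q‖ ^ j * ‖w‖ :=
      (summable_geometric_of_lt_one (norm_nonneg q) hq1).mul_right _
    exact (summable_nat_add_iff 1).mpr this
  · have h0 : Tendsto (fun j : ℕ => ‖q‖ ^ (j+1) * ‖w‖) atTop (𝓝 0) := by
      have := (tendsto_pow_atTop_nhds_zero_of_lt_one (norm_nonneg q) hq1).mul_const ‖w‖
      rw [zero_mul] at this
      exact ((tendsto_add_atTop_iff_nat 1).mpr this)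
    filter_upwards [h0.eventually_le_const (by norm_num : (0:ℝ) < 1/2)] with j hj
    have hnorm : ‖-(q ^ (j+1) * w)‖ ≤ 1/2 := by
      rw [norm_neg, norm_mul, norm_pow]; exact hj
    have hlog := Complex.norm_log_one_add_half_le_self hnorm
    rw [show (1 : ℂ) + -(q ^ (j+1) * w) = 1 - q ^ (j+1) * w by ring] at hlog
    refine hlog.trans (le_of_eq ?_)
    rw [norm_neg, norm_mul, norm_pow]

lemma multipliable_A (hq1 : ‖q‖ < 1) (w : ℂ) :
    Multipliable fun j : ℕ => 1 - q ^ (j + 1) * w := by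
  by_cases h : ∀ j : ℕ, 1 - q ^ (j + 1) * w ≠ 0
  · exact Complex.multipliable_of_summable_log (summable_log hq1 w)
  · push_neg at h
    obtain ⟨k, hk⟩ := h
    exact ⟨0, hasProd_zero_of_eq_zero hk⟩

lemma A_ne_zero (hq1 : ‖q‖ < 1) {w : ℂ} (h : ∀ j : ℕ, 1 - q ^ (j+1) * w ≠ 0) : A q w ≠ 0 := by
  have := Complex.cexp_tsum_eq_tprod (f := fun j => 1 - q ^ (j+1) * w)
    (fun j => h j) (summable_log hq1 w)
  rw [A, ← this]
  exact Complex.exp_ne_zero _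

lemma tprod_nat_shift {f : ℕ → ℂ} (hf : Multipliable fun j => f (j + 1)) :
    ∏' j, f j = f 0 * ∏' j, f (j + 1) := by
  classical
  have hinj : Function.Injective fun j : ℕ => j + 1 := fun a b h => by simpa using h
  have hmulup : Multipliable (Function.update f 0 1) := by
    refine (hinj.multipliable_iff ?_).mp ?_
    · intro x hx
      have hx0 : x = 0 := by
        by_contra h
        exact hx ⟨x - 1, by show x - 1 + 1 = x; omega⟩
      rw [hx0]; exact Function.update_self 0 1 f
    · refine hf.congr fun j => ?_
      show Function.update f 0 1 (j + 1) = f (j + 1)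
      exact Function.update_of_ne (Nat.succ_ne_zero j) 1 f
  rw [Multipliable.tprod_eq_mul_tprod_ite' 0 hmulup]
  congr 1
  have hsupp : Function.mulSupport (fun x : ℕ => if x = 0 then 1 else f x) ⊆
      Set.range (fun j : ℕ => j + 1) := by
    intro x hx
    by_cases h : x = 0
    · exact absurd (by simp [h]) (Function.mem_mulSupport.mp hx)
    · exact ⟨x - 1, by show x - 1 + 1 = x; omega⟩
  calc ∏' (x : ℕ), (if x = 0 then 1 else f x)
      = ∏' (j : ℕ), (if (j + 1 : ℕ) = 0 then 1 else f (j+1)) := (hinj.tprod_eq hsupp).symm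
    _ = ∏' j, f (j + 1) := tprod_congr fun j => by simp

lemma multipliable_of_shift {f : ℕ → ℂ} (hf : Multipliable fun j => f (j + 1)) :
    Multipliable f := by
  classical
  have hinj : Function.Injective fun j : ℕ => j + 1 := fun a b h => by simpa using h
  have hmulup : Multipliable (Function.update f 0 1) := by
    refine (hinj.multipliable_iff ?_).mp ?_
    · intro x hx
      have hx0 : x = 0 := by
        by_contra h
        exact hx ⟨x - 1, by show x - 1 + 1 = x; omega⟩
      rw [hx0]; exact Function.update_self 0 1 f
    · refine hf.congr fun j => ?_
      show Function.update f 0 1 (j + 1) = f (j + 1)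
      exact Function.update_of_ne (Nat.succ_ne_zero j) 1 f
  have h1 : Multipliable fun x : ℕ => if x = 0 then f 0 else 1 :=
    ⟨_, hasProd_single (f := fun x : ℕ => if x = 0 then f 0 else 1) 0 (fun b hb => by simp [hb])⟩
  refine (h1.mul hmulup).congr fun x => ?_
  by_cases h : x = 0 <;> simp [h, Function.update]

lemma A_succ (hq1 : ‖q‖ < 1) (w : ℂ) : A q w = (1 - q * w) * A q (q * w) := by
  have hm : Multipliable fun j : ℕ => 1 - q ^ (j + 1 + 1) * w := by
    refine (multipliable_A hq1 (q * w)).congr fun j => ?_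
    ring
  have h := tprod_nat_shift (f := fun j : ℕ => 1 - q ^ (j + 1) * w) hm
  rw [A, h]
  have h0 : (1 : ℂ) - q ^ (0 + 1) * w = 1 - q * w := by norm_num
  rw [h0]
  congr 1
  rw [A]
  exact tprod_congr fun j => by ring

lemma theta_eq (hq1 : ‖q‖ < 1) (w : ℂ) : theta q w = (1 - w) * A q w * A q w⁻¹ := by
  have h1 : Multipliable fun j : ℕ => 1 - q ^ j * w :=
    multipliable_of_shift (multipliable_A hq1 w)
  have h2 : Multipliable fun j : ℕ => 1 - q ^ (j + 1) * w⁻¹ := multipliable_A hq1 w⁻¹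
  rw [theta, h1.tprod_mul h2]
  have h := tprod_nat_shift (f := fun j : ℕ => 1 - q ^ j * w) (multipliable_A hq1 w)
  rw [h]
  have h0 : (1 : ℂ) - q ^ (0:ℕ) * w = 1 - w := by norm_num
  rw [h0]
  simp only [A]

lemma A_iter (hq1 : ‖q‖ < 1) (N : ℕ) (w : ℂ) :
    A q w = (∏ j ∈ Finset.range N, (1 - q ^ (j+1) * w)) * A q (q ^ N * w) := by
  induction N with
  | zero => simp
  | succ n ih =>
      rw [ih, A_succ hq1 (q ^ n * w), Finset.prod_range_succ,
        show q * (q ^ n * w) = q ^ (n+1) * w by ring]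
      ring

lemma A_differentiable (hq1 : ‖q‖ < 1) : Differentiable ℂ (A q) := by
  intro z₀
  set R : ℝ := ‖z₀‖ + 1 with hRdef
  have hR0 : 0 < R := by positivity
  obtain ⟨N, hN⟩ : ∃ N : ℕ, ‖q‖ ^ N * R ≤ 1 / 2 := by
    have h := tendsto_pow_atTop_nhds_zero_of_lt_one (norm_nonneg q) hq1
    have h2 : Tendsto (fun n : ℕ => ‖q‖ ^ n * R) atTop (𝓝 0) := by simpa using h.mul_const R
    exact (h2.eventually_le_const (show (0:ℝ) < 1/2 by norm_num)).exists
  set U := Metric.ball (0:ℂ) R with hUdef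
  have hUopen : IsOpen U := Metric.isOpen_ball
  have hz₀U : z₀ ∈ U := by
    rw [hUdef, Metric.mem_ball, dist_zero_right]
    simp [hRdef]
  have hwR : ∀ w ∈ U, ‖w‖ ≤ R := by
    intro w hw
    rw [hUdef, Metric.mem_ball, dist_zero_right] at hw
    exact hw.le
  have hqj : ∀ j : ℕ, ‖q‖ ^ j ≤ 1 := fun j => pow_le_one₀ (norm_nonneg q) hq1.le
  have hbound : ∀ (j : ℕ), ∀ w ∈ U, ‖q ^ (j+1) * (q ^ N * w)‖ ≤ ‖q‖ ^ j * (1/2) := by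
    intro j w hw
    have h1 : ‖q ^ (j+1) * (q ^ N * w)‖ = ‖q‖^(j+1) * (‖q‖^N * ‖w‖) := by
      simp [norm_mul, norm_pow]
    rw [h1]
    have h2 : ‖q‖^(j+1) ≤ ‖q‖^j := pow_le_pow_of_le_one (norm_nonneg q) hq1.le (by omega)
    have h3 : ‖q‖^N * ‖w‖ ≤ 1/2 :=
      le_trans (mul_le_mul_of_nonneg_left (hwR w hw) (by positivity)) hN
    exact mul_le_mul h2 h3 (by positivity) (by positivity)
  have hhalf : ∀ (j : ℕ), ‖q‖ ^ j * (1/2) ≤ 1/2 := by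
    intro j
    nlinarith [hqj j, pow_nonneg (norm_nonneg q) j]
  have hfac_ne : ∀ w ∈ U, ∀ j : ℕ, 1 - q ^ (j+1) * (q ^ N * w) ≠ 0 := by
    intro w hw j hzero
    have hb := hbound j w hw
    have h1 : (q ^ (j+1) * (q^N * w)) = 1 := by linear_combination -hzero
    rw [h1] at hb
    have : (1:ℝ) ≤ ‖q‖^j * (1/2) := by simpa using hb
    nlinarith [hhalf j]
  have hslit : ∀ w ∈ U, ∀ j : ℕ, (1 - q ^ (j+1) * (q ^ N * w)) ∈ Complex.slitPlane := by
    intro w hw j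
    rw [Complex.mem_slitPlane_iff]
    left
    have hb := (hbound j w hw).trans (hhalf j)
    have hre : |(q ^ (j+1) * (q ^ N * w)).re| ≤ ‖q ^ (j+1) * (q ^ N * w)‖ :=
      Complex.abs_re_le_norm _
    have : (q ^ (j+1) * (q ^ N * w)).re ≤ 1/2 := le_trans (le_abs_self _) (hre.trans hb)
    simp only [Complex.sub_re, Complex.one_re]
    linarith
  set L : ℂ → ℂ := fun w => ∑' j : ℕ, Complex.log (1 - q ^ (j+1) * (q ^ N * w)) with hLdef
  have hLdiff : DifferentiableOn ℂ L U := by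
    apply differentiableOn_tsum_of_summable_norm (u := fun j : ℕ => 3/2 * (‖q‖^j * (1/2)))
    · apply Summable.mul_left
      apply Summable.mul_right
      exact summable_geometric_of_lt_one (norm_nonneg q) hq1
    · intro j
      intro w hw
      apply DifferentiableAt.differentiableWithinAt
      apply DifferentiableAt.clog
      · fun_prop
      · exact hslit w hw j
    · exact hUopen
    · intro j w hw
      have hz : ‖-(q^(j+1) * (q^N * w))‖ ≤ 1/2 := by
        rw [norm_neg]; exact (hbound j w hw).trans (hhalf j)
      have := Complex.norm_log_one_add_half_le_self hz
      rw [show (1 : ℂ) + -(q ^ (j+1) * (q^N * w)) = 1 - q ^ (j+1) * (q^N * w) by ring] at this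
      refine this.trans ?_
      rw [norm_neg]
      have := hbound j w hw
      nlinarith [this]
  have hrep : ∀ w ∈ U, A q (q ^ N * w) = Complex.exp (L w) := by
    intro w hw
    have h := Complex.cexp_tsum_eq_tprod (f := fun j => 1 - q ^ (j+1) * (q ^ N * w))
      (hfac_ne w hw)
      (summable_log hq1 (q ^ N * w))
    rw [A]
    exact h.symm
  have hdiff2 : DifferentiableAt ℂ
      (fun w => (∏ j ∈ Finset.range N, (1 - q ^ (j+1) * w)) * Complex.exp (L w)) z₀ := by
    apply DifferentiableAt.mul
    · fun_prop
    · exact (hLdiff.differentiableAt (hUopen.mem_nhds hz₀U)).cexp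
  refine hdiff2.congr_of_eventuallyEq ?_
  filter_upwards [hUopen.mem_nhds hz₀U] with w hw
  rw [A_iter hq1 N w, hrep w hw]

lemma theta_differentiableOn (hq1 : ‖q‖ < 1) :
    DifferentiableOn ℂ (theta q) {(0:ℂ)}ᶜ := by
  intro w hw
  have hw0 : w ≠ 0 := hw
  apply DifferentiableAt.differentiableWithinAt
  have hdiff : DifferentiableAt ℂ (fun z : ℂ => (1 - z) * A q z * A q z⁻¹) w := by
    apply DifferentiableAt.mul
    · apply DifferentiableAt.mul
      · fun_prop
      · exact A_differentiable hq1 w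
    · exact (A_differentiable hq1 _).comp w (differentiableAt_inv hw0)
  refine hdiff.congr_of_eventuallyEq ?_
  exact Filter.Eventually.of_forall fun z => theta_eq hq1 z

lemma theta_diffAt (hq1 : ‖q‖ < 1) {w : ℂ} (hw : w ≠ 0) :
    DifferentiableAt ℂ (theta q) w :=
  (theta_differentiableOn hq1 w hw).differentiableAt
    (isOpen_compl_singleton.mem_nhds hw)

lemma theta_one (hq1 : ‖q‖ < 1) : theta q 1 = 0 := by
  rw [theta_eq hq1]; simp

lemma theta_inv (hq1 : ‖q‖ < 1) {w : ℂ} (hw : w ≠ 0) :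
    theta q w⁻¹ = -w⁻¹ * theta q w := by
  rw [theta_eq hq1, theta_eq hq1, inv_inv]
  field_simp
  ring

lemma theta_q_mul (hq0 : q ≠ 0) (hq1 : ‖q‖ < 1) {w : ℂ} (hw : w ≠ 0) :
    theta q (q * w) = -w⁻¹ * theta q w := by
  have h1 : theta q (q * w) = theta q w⁻¹ := by
    rw [theta, theta]
    apply tprod_congr
    intro j
    have e1 : q ^ j * (q * w) = q ^ (j+1) * w := by ring
    have e2 : q ^ (j+1) * (q * w)⁻¹ = q ^ j * w⁻¹ := by
      rw [mul_inv]
      field_simp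
      ring
    rw [e1, e2, inv_inv]
    ring
  rw [h1, theta_inv hq1 hw]

lemma A_one_ne_zero (hq1 : ‖q‖ < 1) : A q 1 ≠ 0 := by
  apply A_ne_zero hq1
  intro j h
  have h1 : q ^ (j+1) = 1 := by linear_combination -h
  have : ‖q ^ (j+1)‖ < 1 := by
    rw [norm_pow]
    exact pow_lt_one₀ (norm_nonneg q) hq1 (Nat.succ_ne_zero j)
  rw [h1] at this
  simp at this

lemma deriv_theta_one (hq1 : ‖q‖ < 1) : deriv (theta q) 1 = -(A q 1 * A q 1) := by
  have hB : DifferentiableAt ℂ (fun z : ℂ => A q z * A q z⁻¹) 1 := by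
    apply DifferentiableAt.mul (A_differentiable hq1 1)
    exact (A_differentiable hq1 _).comp 1 (differentiableAt_inv one_ne_zero)
  have h1 : HasDerivAt (fun z : ℂ => 1 - z) (-1 : ℂ) 1 := by
    simpa using (hasDerivAt_id (1:ℂ)).const_sub 1
  have h2 := h1.mul hB.hasDerivAt
  have h3 : HasDerivAt (theta q) ((-1) * (A q 1 * A q (1:ℂ)⁻¹) +
      (1 - 1) * deriv (fun z : ℂ => A q z * A q z⁻¹) 1) 1 := by
    refine h2.congr_of_eventuallyEq ?_
    exact Filter.Eventually.of_forall fun z => by rw [theta_eq hq1 z, Pi.mul_apply]; ring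
  rw [h3.deriv]
  simp

lemma deriv_rel (hq0 : q ≠ 0) (hq1 : ‖q‖ < 1) {w : ℂ} (hw : w ≠ 0) :
    deriv (theta q) (q * w) * q = (w^2)⁻¹ * theta q w + (-w⁻¹) * deriv (theta q) w := by
  have hqw : q * w ≠ 0 := mul_ne_zero hq0 hw
  have h1 : HasDerivAt (fun z : ℂ => theta q (q * z)) (deriv (theta q) (q * w) * q) w := by
    have hg := (theta_diffAt hq1 hqw).hasDerivAt
    have hf : HasDerivAt (fun z : ℂ => q * z) q w := by
      simpa using (hasDerivAt_id w).const_mul q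
    exact HasDerivAt.comp w hg hf
  have h2 : HasDerivAt (fun z : ℂ => -z⁻¹ * theta q z)
      ((w^2)⁻¹ * theta q w + (-w⁻¹) * deriv (theta q) w) w := by
    have ha : HasDerivAt (fun z : ℂ => -z⁻¹) ((w^2)⁻¹) w := by
      have := (hasDerivAt_inv hw).fun_neg
      simpa using this
    exact ha.mul (theta_diffAt hq1 hw).hasDerivAt
  have heq : (fun z : ℂ => theta q (q * z)) =ᶠ[𝓝 w] fun z : ℂ => -z⁻¹ * theta q z := by
    filter_upwards [isOpen_compl_singleton.mem_nhds (hw : w ∈ ({0}ᶜ : Set ℂ))] with z hz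
    exact theta_q_mul hq0 hq1 hz
  exact (h1.congr_of_eventuallyEq heq.symm).unique h2

lemma theta_zpow (hq0 : q ≠ 0) (hq1 : ‖q‖ < 1) :
    ∀ n : ℤ, theta q (q ^ n) = 0 ∧ deriv (theta q) (q ^ n) ≠ 0 := by
  have hzne : ∀ n : ℤ, (q ^ n : ℂ) ≠ 0 := fun n => zpow_ne_zero n hq0
  have hstep : ∀ n : ℤ, q * q ^ n = q ^ (n + 1) := by
    intro n
    rw [zpow_add_one₀ hq0]
    ring
  intro n
  induction n using Int.induction_on with
  | zero =>
      constructor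
      · simpa using theta_one hq1
      · rw [zpow_zero, deriv_theta_one hq1]
        simpa using mul_ne_zero (A_one_ne_zero hq1) (A_one_ne_zero hq1)
  | succ n ih =>
      obtain ⟨h0, h1⟩ := ih
      constructor
      · rw [← hstep n, theta_q_mul hq0 hq1 (hzne n), h0]
        ring
      · have := deriv_rel hq0 hq1 (hzne n)
        rw [h0, hstep n] at this
        intro hcon
        rw [hcon] at this
        simp only [zero_mul, mul_zero, zero_add] at this
        exact h1 (by
          have hinv : (q ^ (n:ℤ) : ℂ)⁻¹ ≠ 0 := inv_ne_zero (hzne n)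
          field_simp at this
          linear_combination this)
  | pred n ih =>
      obtain ⟨h0, h1⟩ := ih
      have hw := hzne (-n - 1)
      have hq' : q * q ^ (-(n:ℤ) - 1) = q ^ (-(n:ℤ)) := by
        rw [hstep (-n-1)]; norm_num
      constructor
      · have := theta_q_mul hq0 hq1 hw
        rw [hq', h0] at this
        have h2 := this.symm
        rcases mul_eq_zero.mp h2 with h | h
        · exact absurd (neg_eq_zero.mp h) (inv_ne_zero hw)
        · exact h
      · have := deriv_rel hq0 hq1 hw
        rw [hq'] at this
        intro hcon
        rw [hcon] at this
        have hz0 : theta q (q ^ (-(n:ℤ) - 1)) = 0 := by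
          have := theta_q_mul hq0 hq1 hw
          rw [hq', h0] at this
          rcases mul_eq_zero.mp this.symm with h | h
          · exact absurd (neg_eq_zero.mp h) (inv_ne_zero hw)
          · exact h
        rw [hz0] at this
        simp only [mul_zero, zero_add, mul_zero] at this
        rcases mul_eq_zero.mp this with h | h
        · exact h1 h
        · exact hq0 h

lemma theta_zero_imp (hq0 : q ≠ 0) (hq1 : ‖q‖ < 1) {w : ℂ} (hw : w ≠ 0)
    (h : theta q w = 0) : ∃ n : ℤ, w = q ^ n := by
  rw [theta_eq hq1] at h
  rcases mul_eq_zero.mp h with h | h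
  · rcases mul_eq_zero.mp h with h | h
    · exact ⟨0, by rw [zpow_zero]; linear_combination -h⟩
    · by_contra
      have : ∃ j : ℕ, 1 - q ^ (j+1) * w = 0 := by
        by_contra hc
        push_neg at hc
        exact A_ne_zero hq1 hc h
      obtain ⟨j, hj⟩ := this
      have hne := this
      apply hne
      refine ⟨-(j+1 : ℕ), ?_⟩
      have : q ^ (j+1) * w = 1 := by linear_combination -hj
      rw [zpow_neg, zpow_natCast]
      field_simp
      linear_combination this
  · by_contra hne
    have : ∃ j : ℕ, 1 - q ^ (j+1) * w⁻¹ = 0 := by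
      by_contra hc
      push_neg at hc
      exact A_ne_zero hq1 hc h
    obtain ⟨j, hj⟩ := this
    apply hne
    refine ⟨(j+1 : ℕ), ?_⟩
    have h2 : q ^ (j+1) * w⁻¹ = 1 := by linear_combination -hj
    rw [zpow_natCast]
    field_simp at h2
    exact h2.symm

lemma neg_zpow_ne_zpow (hq0 : q ≠ 0) (hq1 : ‖q‖ < 1) (n m : ℤ) : -q ^ n ≠ q ^ m := by
  intro h
  have hq_pos : 0 < ‖q‖ := norm_pos_iff.mpr hq0
  have hnorm : ‖q‖ ^ n = ‖q‖ ^ m := by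
    have := congrArg norm h
    rwa [norm_neg, norm_zpow, norm_zpow] at this
  have hnm : n = m := (zpow_right_strictAnti₀ hq_pos hq1).injective hnorm
  rw [hnm] at h
  have : (2 : ℂ) * q ^ m = 0 := by linear_combination -h
  simp [zpow_ne_zero m hq0] at this

noncomputable def Kf (q y x : ℂ) : ℂ :=
  theta q (-y) ^ 2 * theta q x ^ 2 - theta q (-x) ^ 2 * theta q y ^ 2
    - theta q (-1) ^ 2 * y * theta q (x * y) * theta q (x / y)

lemma K_one (hq1 : ‖q‖ < 1) (hy : y ≠ 0) : Kf q y 1 = 0 := by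
  unfold Kf
  rw [theta_one hq1, show (1 : ℂ) / y = y⁻¹ by rw [one_div], theta_inv hq1 hy,
    show (-1 : ℂ) = -1 from rfl, one_mul]
  field_simp
  ring

lemma K_neg_one (hq1 : ‖q‖ < 1) (hy : y ≠ 0) : Kf q y (-1) = 0 := by
  have hny : (-y : ℂ) ≠ 0 := neg_ne_zero.mpr hy
  unfold Kf
  rw [show -(-1 : ℂ) = 1 by ring, theta_one hq1,
    show (-1 : ℂ) * y = -y by ring,
    show (-1 : ℂ) / y = (-y)⁻¹ by field_simp,
    theta_inv hq1 hny]
  field_simp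
  ring

lemma K_q_mul (hq0 : q ≠ 0) (hq1 : ‖q‖ < 1) (hy : y ≠ 0) {x : ℂ} (hx : x ≠ 0) :
    Kf q y (q * x) = (x ^ 2)⁻¹ * Kf q y x := by
  have hnx : (-x : ℂ) ≠ 0 := neg_ne_zero.mpr hx
  have hxy : x * y ≠ 0 := mul_ne_zero hx hy
  have hxdy : x / y ≠ 0 := div_ne_zero hx hy
  unfold Kf
  rw [show -(q * x) = q * (-x) by ring, show q * x * y = q * (x * y) by ring,
    show q * x / y = q * (x / y) by ring,
    theta_q_mul hq0 hq1 hx, theta_q_mul hq0 hq1 hnx,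
    theta_q_mul hq0 hq1 hxy, theta_q_mul hq0 hq1 hxdy]
  field_simp

lemma K_zpow_mul (hq0 : q ≠ 0) (hq1 : ‖q‖ < 1) (hy : y ≠ 0) {s : ℂ} (hs : s ≠ 0)
    (h : Kf q y s = 0) : ∀ n : ℤ, Kf q y (q ^ n * s) = 0 := by
  have hzne : ∀ n : ℤ, (q ^ n * s : ℂ) ≠ 0 := fun n => mul_ne_zero (zpow_ne_zero n hq0) hs
  intro n
  induction n using Int.induction_on with
  | zero => simpa using h
  | succ n ih =>
      have hstep : (q ^ ((n : ℤ) + 1) * s : ℂ) = q * (q ^ (n : ℤ) * s) := by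
        rw [zpow_add_one₀ hq0]; ring
      rw [hstep, K_q_mul hq0 hq1 hy (hzne n), ih, mul_zero]
  | pred n ih =>
      have hstep : (q ^ (-(n : ℤ)) * s : ℂ) = q * (q ^ (-(n : ℤ) - 1) * s) := by
        rw [show (-(n:ℤ)) = (-(n:ℤ) - 1) + 1 by ring, zpow_add_one₀ hq0]; ring
      rw [hstep, K_q_mul hq0 hq1 hy (hzne (-(n:ℤ) - 1))] at ih
      have := ih.symm
      rcases mul_eq_zero.mp ih with h2 | h2
      · exact absurd h2 (inv_ne_zero (pow_ne_zero 2 (hzne (-(n:ℤ) - 1))))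
      · exact h2

lemma K_vanish (hq0 : q ≠ 0) (hq1 : ‖q‖ < 1) (hy : y ≠ 0) {x₀ : ℂ} (hx₀ : x₀ ≠ 0)
    (h : theta q x₀ * theta q (-x₀) = 0) : Kf q y x₀ = 0 := by
  rcases mul_eq_zero.mp h with h | h
  · obtain ⟨n, hn⟩ := theta_zero_imp hq0 hq1 hx₀ h
    have := K_zpow_mul hq0 hq1 hy one_ne_zero (K_one hq1 hy) n
    rwa [mul_one, ← hn] at this
  · obtain ⟨n, hn⟩ := theta_zero_imp hq0 hq1 (neg_ne_zero.mpr hx₀) h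
    have hx : x₀ = q ^ n * (-1) := by rw [← neg_eq_iff_eq_neg.mpr hn.symm]; ring
    have := K_zpow_mul hq0 hq1 hy (by norm_num : (-1:ℂ) ≠ 0) (K_neg_one hq1 hy) n
    rwa [← hx] at this

lemma K_diffAt (hq1 : ‖q‖ < 1) (hy : y ≠ 0) {x : ℂ} (hx : x ≠ 0) :
    DifferentiableAt ℂ (Kf q y) x := by
  have h1 : DifferentiableAt ℂ (theta q) x := theta_diffAt hq1 hx
  have h2 : DifferentiableAt ℂ (fun x : ℂ => theta q (-x)) x :=
    (theta_diffAt hq1 (neg_ne_zero.mpr hx)).comp x (differentiable_neg _)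
  have h3 : DifferentiableAt ℂ (fun x : ℂ => theta q (x * y)) x := by
    have := (theta_diffAt hq1 (mul_ne_zero hx hy)).comp x
      ((differentiableAt_id.mul_const y))
    exact this
  have h4 : DifferentiableAt ℂ (fun x : ℂ => theta q (x / y)) x := by
    have := (theta_diffAt hq1 (div_ne_zero hx hy)).comp x
      ((differentiableAt_id.div_const y))
    exact this
  unfold Kf
  fun_prop

-- the product g
lemma g_deriv_ne (hq0 : q ≠ 0) (hq1 : ‖q‖ < 1) {x₀ : ℂ} (hx₀ : x₀ ≠ 0)
    (h : theta q x₀ * theta q (-x₀) = 0) :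
    deriv (fun x => theta q x * theta q (-x)) x₀ ≠ 0 := by
  have hnx : (-x₀ : ℂ) ≠ 0 := neg_ne_zero.mpr hx₀
  have hneg : HasDerivAt (fun x : ℂ => theta q (-x)) (deriv (theta q) (-x₀) * (-1)) x₀ :=
    (theta_diffAt hq1 hnx).hasDerivAt.comp x₀ (hasDerivAt_neg x₀)
  have hg : HasDerivAt (fun x => theta q x * theta q (-x))
      (deriv (theta q) x₀ * theta q (-x₀) + theta q x₀ * (deriv (theta q) (-x₀) * (-1))) x₀ :=
    (theta_diffAt hq1 hx₀).hasDerivAt.mul hneg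
  rw [hg.deriv]
  rcases mul_eq_zero.mp h with h | h
  · obtain ⟨n, hn⟩ := theta_zero_imp hq0 hq1 hx₀ h
    have hder : deriv (theta q) x₀ ≠ 0 := by rw [hn]; exact (theta_zpow hq0 hq1 n).2
    have hth2 : theta q (-x₀) ≠ 0 := by
      intro hc
      obtain ⟨m, hm⟩ := theta_zero_imp hq0 hq1 hnx hc
      rw [hn] at hm
      exact neg_zpow_ne_zpow hq0 hq1 n m hm
    rw [h]
    simpa using mul_ne_zero hder hth2
  · obtain ⟨n, hn⟩ := theta_zero_imp hq0 hq1 hnx h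
    have hth1 : theta q x₀ ≠ 0 := by
      intro hc
      obtain ⟨m, hm⟩ := theta_zero_imp hq0 hq1 hx₀ hc
      exact neg_zpow_ne_zpow hq0 hq1 m n (by rw [← hm]; exact hn)
    have hder : deriv (theta q) (-x₀) ≠ 0 := by rw [hn]; exact (theta_zpow hq0 hq1 n).2
    rw [h]
    simp only [mul_zero, zero_add]
    exact mul_ne_zero hth1 (by simpa using hder)

noncomputable def gf (q : ℂ) : ℂ → ℂ := fun x => theta q x * theta q (-x)

noncomputable def Hf (q y : ℂ) : ℂ → ℂ := fun x => Kf q y x / gf q x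

noncomputable def Ff (q y : ℂ) : ℂ → ℂ := fun x => limUnder (𝓝[≠] x) (Hf q y)

lemma g_diffAt (hq1 : ‖q‖ < 1) {x : ℂ} (hx : x ≠ 0) :
    DifferentiableAt ℂ (gf q) x := by
  apply DifferentiableAt.mul (theta_diffAt hq1 hx)
  exact (theta_diffAt hq1 (neg_ne_zero.mpr hx)).comp x (differentiable_neg _)

lemma g_q_mul (hq0 : q ≠ 0) (hq1 : ‖q‖ < 1) {x : ℂ} (hx : x ≠ 0) :
    gf q (q * x) = -(x ^ 2)⁻¹ * gf q x := by
  unfold gf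
  rw [show -(q * x) = q * (-x) by ring, theta_q_mul hq0 hq1 hx,
    theta_q_mul hq0 hq1 (neg_ne_zero.mpr hx), inv_neg]
  ring

lemma H_diffAt (hq1 : ‖q‖ < 1) (hy : y ≠ 0) {x : ℂ} (hx : x ≠ 0) (hg : gf q x ≠ 0) :
    DifferentiableAt ℂ (Hf q y) x :=
  (K_diffAt hq1 hy hx).div (g_diffAt hq1 hx) hg

lemma Ff_eq_Hf (hq1 : ‖q‖ < 1) (hy : y ≠ 0) {x : ℂ} (hx : x ≠ 0) (hg : gf q x ≠ 0) :
    Ff q y x = Hf q y x := by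
  apply Filter.Tendsto.limUnder_eq
  exact ((H_diffAt hq1 hy hx hg).continuousAt.tendsto).mono_left nhdsWithin_le_nhds

lemma F_diffAt (hq0 : q ≠ 0) (hq1 : ‖q‖ < 1) (hy : y ≠ 0) {x₀ : ℂ} (hx₀ : x₀ ≠ 0) :
    DifferentiableAt ℂ (Ff q y) x₀ ∧ Kf q y x₀ = gf q x₀ * Ff q y x₀ := by
  by_cases hg : gf q x₀ = 0
  · -- bad point
    have hK0 : Kf q y x₀ = 0 := K_vanish hq0 hq1 hy hx₀ hg
    have hg' : deriv (gf q) x₀ ≠ 0 := g_deriv_ne hq0 hq1 hx₀ hg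
    have hs : ({0}ᶜ : Set ℂ) ∈ 𝓝 x₀ := isOpen_compl_singleton.mem_nhds hx₀
    have hKdOn : DifferentiableOn ℂ (Kf q y) ({0}ᶜ : Set ℂ) := fun z hz =>
      (K_diffAt hq1 hy hz).differentiableWithinAt
    have hgdOn : DifferentiableOn ℂ (gf q) ({0}ᶜ : Set ℂ) := fun z hz =>
      (g_diffAt hq1 hz).differentiableWithinAt
    have hdk : DifferentiableOn ℂ (dslope (Kf q y) x₀) ({0}ᶜ : Set ℂ) :=
      (Complex.differentiableOn_dslope hs).mpr hKdOn
    have hdg : DifferentiableOn ℂ (dslope (gf q) x₀) ({0}ᶜ : Set ℂ) :=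
      (Complex.differentiableOn_dslope hs).mpr hgdOn
    have hdg00 : dslope (gf q) x₀ x₀ ≠ 0 := by rw [dslope_same]; exact hg'
    set h : ℂ → ℂ := fun z => dslope (Kf q y) x₀ z / dslope (gf q) x₀ z with hhdef
    have hdkAt : DifferentiableAt ℂ (dslope (Kf q y) x₀) x₀ := hdk.differentiableAt hs
    have hdgAt : DifferentiableAt ℂ (dslope (gf q) x₀) x₀ := hdg.differentiableAt hs
    have hdiffh : DifferentiableAt ℂ h x₀ := hdkAt.div hdgAt hdg00
    -- pointwise identity off x₀
    have hpoint : ∀ z : ℂ, z ≠ x₀ → z ≠ 0 → dslope (gf q) x₀ z ≠ 0 →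
        (gf q z ≠ 0 ∧ Hf q y z = h z) := by
      intro z hzx hz0 hdgz
      have hsub : (z - x₀) ≠ 0 := sub_ne_zero.mpr hzx
      have hgz : gf q z = (z - x₀) * dslope (gf q) x₀ z := by
        have h1 := sub_smul_dslope (gf q) x₀ z
        rw [smul_eq_mul, hg, sub_zero] at h1
        exact h1.symm
      have hKz : Kf q y z = (z - x₀) * dslope (Kf q y) x₀ z := by
        have h1 := sub_smul_dslope (Kf q y) x₀ z
        rw [smul_eq_mul, hK0, sub_zero] at h1
        exact h1.symm
      refine ⟨by rw [hgz]; exact mul_ne_zero hsub hdgz, ?_⟩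
      rw [Hf]
      rw [hKz, hgz, mul_div_mul_left _ _ hsub]
    have hVg : ∀ᶠ z in 𝓝 x₀, dslope (gf q) x₀ z ≠ 0 :=
      hdgAt.continuousAt.eventually_ne hdg00
    have hV0 : ∀ᶠ z in 𝓝 x₀, z ≠ 0 := isOpen_compl_singleton.mem_nhds hx₀
    have hFh : Ff q y =ᶠ[𝓝 x₀] h := by
      filter_upwards [hVg, hV0, eventually_eventually_nhds.mpr hVg,
        eventually_eventually_nhds.mpr hV0] with z hdgz hz0 hVg' hV0'
      by_cases hzx : z = x₀
      · subst hzx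
        apply Filter.Tendsto.limUnder_eq
        have htend : Tendsto h (𝓝[≠] z) (𝓝 (h z)) :=
          (hdiffh.continuousAt.tendsto).mono_left nhdsWithin_le_nhds
        apply htend.congr'
        have hev : ∀ᶠ w in 𝓝[≠] z, dslope (gf q) z w ≠ 0 ∧ w ≠ 0 ∧ w ≠ z := by
          have e1 : ∀ᶠ w in 𝓝[≠] z, dslope (gf q) z w ≠ 0 := hVg'.filter_mono nhdsWithin_le_nhds
          have e2 : ∀ᶠ w in 𝓝[≠] z, w ≠ 0 := hV0'.filter_mono nhdsWithin_le_nhds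
          have e3 : ∀ᶠ w in 𝓝[≠] z, w ≠ z := self_mem_nhdsWithin
          filter_upwards [e1, e2, e3] with w h1 h2 h3
          exact ⟨h1, h2, h3⟩
        filter_upwards [hev] with w hw
        exact ((hpoint w hw.2.2 hw.2.1 hw.1).2).symm
      · exact (Ff_eq_Hf hq1 hy hz0 (hpoint z hzx hz0 hdgz).1).trans (hpoint z hzx hz0 hdgz).2
    refine ⟨(hFh.differentiableAt_iff).mpr hdiffh, ?_⟩
    rw [hK0, hg, zero_mul]
  · -- good point
    have hgood : ∀ᶠ z in 𝓝 x₀, z ≠ 0 ∧ gf q z ≠ 0 := by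
      have h1 : ∀ᶠ z in 𝓝 x₀, z ≠ 0 := isOpen_compl_singleton.mem_nhds hx₀
      have h2 : ∀ᶠ z in 𝓝 x₀, gf q z ≠ 0 :=
        (g_diffAt hq1 hx₀).continuousAt.eventually_ne hg
      filter_upwards [h1, h2] with z hz1 hz2
      exact ⟨hz1, hz2⟩
    have hFH : Ff q y =ᶠ[𝓝 x₀] Hf q y := by
      filter_upwards [hgood] with z hz
      exact Ff_eq_Hf hq1 hy hz.1 hz.2
    constructor
    · exact (hFH.differentiableAt_iff).mpr (H_diffAt hq1 hy hx₀ hg)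
    · rw [Ff_eq_Hf hq1 hy hx₀ hg, Hf, mul_div_cancel₀ _ hg]


lemma eventually_good (hq0 : q ≠ 0) (hq1 : ‖q‖ < 1) (hy : y ≠ 0) {x : ℂ} (hx : x ≠ 0) :
    ∀ᶠ z in 𝓝[≠] x, z ≠ 0 ∧ gf q z ≠ 0 := by
  have h0 : ∀ᶠ z in 𝓝[≠] x, z ≠ 0 := by
    have h0' : ∀ᶠ z in 𝓝 x, z ≠ 0 := isOpen_compl_singleton.mem_nhds hx
    exact h0'.filter_mono nhdsWithin_le_nhds
  have han : AnalyticAt ℂ (gf q) x := by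
    have : DifferentiableOn ℂ (gf q) ({0}ᶜ : Set ℂ) := fun z hz =>
      (g_diffAt hq1 hz).differentiableWithinAt
    exact this.analyticAt (isOpen_compl_singleton.mem_nhds hx)
  rcases han.eventually_eq_zero_or_eventually_ne_zero with h | h
  · exfalso
    by_cases hgx : gf q x = 0
    · have hd : deriv (gf q) x = 0 := by
        have : gf q =ᶠ[𝓝 x] (fun _ => 0) := h
        rw [this.deriv_eq, deriv_const]
      exact g_deriv_ne hq0 hq1 hx hgx hd
    · exact hgx h.self_of_nhds
  · filter_upwards [h0, h] with z h1 h2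
    exact ⟨h1, h2⟩

lemma F_q_neg (hq0 : q ≠ 0) (hq1 : ‖q‖ < 1) (hy : y ≠ 0) {x : ℂ} (hx : x ≠ 0) :
    Ff q y (q * x) = -Ff q y x := by
  have hqx : q * x ≠ 0 := mul_ne_zero hq0 hx
  have h1 : Tendsto (fun z => Ff q y (q * z)) (𝓝[≠] x) (𝓝 (Ff q y (q * x))) := by
    have hc : ContinuousAt (fun z => Ff q y (q * z)) x := by
      have := ((F_diffAt hq0 hq1 hy hqx).1.comp x
        ((differentiableAt_id.const_mul q) : DifferentiableAt ℂ (fun z : ℂ => q * z) x))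
      exact this.continuousAt
    exact hc.tendsto.mono_left nhdsWithin_le_nhds
  have h2 : Tendsto (fun z => -Ff q y z) (𝓝[≠] x) (𝓝 (-Ff q y x)) := by
    have hc : ContinuousAt (fun z => -Ff q y z) x :=
      ((F_diffAt hq0 hq1 hy hx).1.neg).continuousAt
    exact hc.tendsto.mono_left nhdsWithin_le_nhds
  refine tendsto_nhds_unique_of_eventuallyEq h1 h2 ?_
  filter_upwards [eventually_good hq0 hq1 hy hx] with z hz
  obtain ⟨hz0, hgz⟩ := hz
  have hqz : q * z ≠ 0 := mul_ne_zero hq0 hz0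
  have hgqz : gf q (q * z) ≠ 0 := by
    rw [g_q_mul hq0 hq1 hz0]
    exact mul_ne_zero (neg_ne_zero.mpr (inv_ne_zero (pow_ne_zero 2 hz0))) hgz
  rw [Ff_eq_Hf hq1 hy hqz hgqz, Ff_eq_Hf hq1 hy hz0 hgz]
  rw [Hf]
  rw [Hf]
  rw [K_q_mul hq0 hq1 hy hz0, g_q_mul hq0 hq1 hz0, neg_mul, div_neg,
    mul_div_mul_left _ _ (inv_ne_zero (pow_ne_zero 2 hz0))]

lemma F_zpow_norm (hq0 : q ≠ 0) (hq1 : ‖q‖ < 1) (hy : y ≠ 0) :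
    ∀ (n : ℤ) {x : ℂ}, x ≠ 0 → ‖Ff q y (q ^ n * x)‖ = ‖Ff q y x‖ := by
  intro n
  induction n using Int.induction_on with
  | zero => intro x hx; rw [zpow_zero, one_mul]
  | succ n ih =>
      intro x hx
      have : (q ^ ((n:ℤ) + 1) * x : ℂ) = q * (q ^ (n:ℤ) * x) := by
        rw [zpow_add_one₀ hq0]; ring
      rw [this, F_q_neg hq0 hq1 hy (mul_ne_zero (zpow_ne_zero n hq0) hx), norm_neg]
      exact ih hx
  | pred n ih =>
      intro x hx
      have hne : (q ^ (-(n:ℤ) - 1) * x : ℂ) ≠ 0 := mul_ne_zero (zpow_ne_zero _ hq0) hx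
      have : (q ^ (-(n:ℤ)) * x : ℂ) = q * (q ^ (-(n:ℤ) - 1) * x) := by
        rw [show (-(n:ℤ)) = (-(n:ℤ) - 1) + 1 by ring, zpow_add_one₀ hq0]; ring
      have h2 := ih hx
      rw [this, F_q_neg hq0 hq1 hy hne, norm_neg] at h2
      exact h2

lemma F_bounded (hq0 : q ≠ 0) (hq1 : ‖q‖ < 1) (hy : y ≠ 0) :
    ∃ C : ℝ, ∀ x : ℂ, x ≠ 0 → ‖Ff q y x‖ ≤ C := by
  have hq_pos : 0 < ‖q‖ := norm_pos_iff.mpr hq0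
  set S : Set ℂ := Metric.closedBall 0 1 \ Metric.ball 0 ‖q‖ with hSdef
  have hScompact : IsCompact S := (isCompact_closedBall 0 1).diff Metric.isOpen_ball
  have hSne : ∀ z ∈ S, z ≠ 0 := by
    intro z hz h0
    rw [hSdef] at hz
    obtain ⟨_, hz2⟩ := hz
    apply hz2
    rw [h0]
    simpa using hq_pos
  have hcont : ContinuousOn (Ff q y) S := by
    intro z hz
    exact ((F_diffAt hq0 hq1 hy (hSne z hz)).1.continuousAt).continuousWithinAt
  obtain ⟨C, hC⟩ := hScompact.exists_bound_of_continuousOn hcont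
  refine ⟨C, fun x hx => ?_⟩
  have hx_pos : 0 < ‖x‖ := norm_pos_iff.mpr hx
  obtain ⟨n, h1, h2⟩ := exists_mem_Ico_zpow hx_pos ((one_lt_inv₀ hq_pos).mpr hq1)
  -- h1 : (‖q‖⁻¹) ^ n ≤ ‖x‖, h2 : ‖x‖ < (‖q‖⁻¹) ^ (n+1)
  have hmem : q ^ (n + 1) * x ∈ S := by
    have hnorm : ‖q ^ (n+1) * x‖ = ‖q‖ ^ (n+1) * ‖x‖ := by
      rw [norm_mul, norm_zpow]
    have hzp : (0:ℝ) < ‖q‖ ^ (n+1) := zpow_pos hq_pos _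
    constructor
    · rw [Metric.mem_closedBall, dist_zero_right, hnorm]
      have : ‖x‖ < ‖q‖ ^ (-(n+1)) := by
        rw [zpow_neg]
        rw [← inv_zpow]
        exact h2
      calc ‖q‖ ^ (n+1) * ‖x‖ ≤ ‖q‖ ^ (n+1) * ‖q‖ ^ (-(n+1)) :=
            mul_le_mul_of_nonneg_left this.le hzp.le
        _ = 1 := by
              rw [← zpow_add₀ (ne_of_gt hq_pos), show (n+1) + -(n+1) = 0 by ring, zpow_zero]
    · rw [Metric.mem_ball, dist_zero_right, hnorm]
      push_neg
      have : ‖q‖ ^ (-n : ℤ) ≤ ‖x‖ := by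
        rw [zpow_neg, ← inv_zpow]
        exact h1
      calc ‖q‖ = ‖q‖ ^ (n+1) * ‖q‖ ^ (-n : ℤ) := by
            rw [← zpow_add₀ (ne_of_gt hq_pos), show (n+1) + -n = 1 by ring, zpow_one]
        _ ≤ ‖q‖ ^ (n+1) * ‖x‖ := mul_le_mul_of_nonneg_left this hzp.le
  have := F_zpow_norm hq0 hq1 hy (n+1) hx
  rw [← this]
  exact hC _ hmem

lemma K_zero (hq0' : q ≠ 0) (hq1 : ‖q‖ < 1) (hy : y ≠ 0) :
    ∀ x : ℂ, x ≠ 0 → Kf q y x = 0 := by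
  obtain ⟨C, hC⟩ := F_bounded hq0' hq1 hy
  set G : ℂ → ℂ := Function.update (Ff q y) 0 (limUnder (𝓝[≠] (0:ℂ)) (Ff q y)) with hGdef
  have hFd : DifferentiableOn ℂ (Ff q y) (univ \ {0}) := by
    intro z hz
    have hz0 : z ≠ 0 := by
      intro h; exact hz.2 (by simp [h])
    exact (F_diffAt hq0' hq1 hy hz0).1.differentiableWithinAt
  have ho : (fun z => Ff q y z - Ff q y 0) =o[𝓝[≠] (0:ℂ)] fun z => (z - 0)⁻¹ := by
    have hbig : (fun z => Ff q y z - Ff q y 0) =O[𝓝[≠] (0:ℂ)] (fun _ => (1:ℝ)) := by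
      rw [isBigO_iff]
      refine ⟨C + ‖Ff q y 0‖, ?_⟩
      have h0 : ∀ᶠ z in 𝓝[≠] (0:ℂ), z ≠ 0 := self_mem_nhdsWithin
      filter_upwards [h0] with z hz
      simp only [norm_one, mul_one]
      calc ‖Ff q y z - Ff q y 0‖ ≤ ‖Ff q y z‖ + ‖Ff q y 0‖ := norm_sub_le _ _
        _ ≤ C + ‖Ff q y 0‖ := by gcongr; exact hC z hz
    have hsmall : (fun _ : ℂ => (1:ℝ)) =o[𝓝[≠] (0:ℂ)] fun z => (z - 0)⁻¹ := by
      rw [isLittleO_const_left]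
      right
      have h1 : Tendsto (fun z : ℂ => ‖z‖) (𝓝[≠] (0:ℂ)) (𝓝[>] 0) := by
        apply tendsto_nhdsWithin_of_tendsto_nhds_of_eventually_within
        · exact (continuous_norm.tendsto' 0 0 (by simp)).mono_left nhdsWithin_le_nhds
        · filter_upwards [self_mem_nhdsWithin] with z (hz : z ≠ 0)
          exact norm_pos_iff.mpr hz
      have h2 := tendsto_inv_nhdsGT_zero.comp h1
      have : (fun z : ℂ => ‖(z - 0)⁻¹‖) = fun z : ℂ => (fun r : ℝ => r⁻¹) ‖z‖ := by
        funext z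
        simp [norm_inv]
      rw [show (norm ∘ fun z : ℂ => (z - 0)⁻¹) = fun z : ℂ => ‖(z-0)⁻¹‖ from rfl, this]
      exact h2
    exact hbig.trans_isLittleO hsmall
  have hGd : DifferentiableOn ℂ G univ :=
    Complex.differentiableOn_update_limUnder_of_isLittleO (univ_mem) hFd ho
  have hGdiff : Differentiable ℂ G := differentiableOn_univ.mp hGd
  have hGeqF : ∀ z : ℂ, z ≠ 0 → G z = Ff q y z := fun z hz =>
    Function.update_of_ne hz _ _
  have hG0 : ‖G 0‖ ≤ C := by
    have htd : Tendsto G (𝓝 0) (𝓝 (G 0)) := (hGdiff 0).continuousAt.tendsto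
    have htd2 : Tendsto (Ff q y) (𝓝[≠] (0:ℂ)) (𝓝 (G 0)) := by
      refine (htd.mono_left nhdsWithin_le_nhds).congr' ?_
      filter_upwards [self_mem_nhdsWithin] with z (hz : z ≠ 0)
      exact hGeqF z hz
    refine le_of_tendsto htd2.norm ?_
    filter_upwards [self_mem_nhdsWithin] with z (hz : z ≠ 0)
    exact hC z hz
  have hGbdd : Bornology.IsBounded (range G) := by
    apply (Metric.isBounded_closedBall (x := (0:ℂ)) (r := C)).subset
    rintro w ⟨z, rfl⟩
    rw [Metric.mem_closedBall, dist_zero_right]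
    by_cases hz : z = 0
    · rw [hz]; exact hG0
    · rw [hGeqF z hz]; exact hC z hz
  have hGconst := hGdiff.apply_eq_apply_of_bounded hGbdd
  have hF1 : Ff q y 1 = 0 := by
    have h1 : Ff q y (q * 1) = -Ff q y 1 := F_q_neg hq0' hq1 hy one_ne_zero
    have h2 : G (q * 1) = G 1 := hGconst _ _
    rw [hGeqF _ (by simpa using hq0'), hGeqF _ one_ne_zero] at h2
    rw [h2] at h1
    have h3 : (2:ℂ) * Ff q y 1 = 0 := by linear_combination h1
    rcases mul_eq_zero.mp h3 with h4 | h4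
    · norm_num at h4
    · exact h4
  intro x hx
  have h2 : G x = G 1 := hGconst _ _
  rw [hGeqF _ hx, hGeqF _ one_ne_zero, hF1] at h2
  rw [(F_diffAt hq0' hq1 hy hx).2, h2, mul_zero]


end ThetaAux

theorem theta_addition_formula (q x y : ℂ) (hq0 : 0 < ‖q‖)
    (hq1 : ‖q‖ < 1) (hx : x ≠ 0) (hy : y ≠ 0)
    (hθx : theta q x ≠ 0) (hθy : theta q y ≠ 0) (hθ1 : theta q (-1) ≠ 0) :
    y * theta q (x * y) * theta q (x / y) / (theta q x ^ 2 * theta q y ^ 2)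
      = fTheta q y - fTheta q x := by
  have hq0' : q ≠ 0 := by
    intro h
    rw [h] at hq0
    simp at hq0
  have hq1' : ‖q‖ < 1 := by exact hq1
  have hK := ThetaAux.K_zero hq0' hq1' hy x hx
  unfold ThetaAux.Kf at hK
  rw [fTheta, fTheta, div_sub_div _ _ (mul_ne_zero (pow_ne_zero 2 hθ1) (pow_ne_zero 2 hθy))
    (mul_ne_zero (pow_ne_zero 2 hθ1) (pow_ne_zero 2 hθx)), div_eq_div_iff
    (mul_ne_zero (pow_ne_zero 2 hθx) (pow_ne_zero 2 hθy))
    (mul_ne_zero (mul_ne_zero (pow_ne_zero 2 hθ1) (pow_ne_zero 2 hθy))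
      (mul_ne_zero (pow_ne_zero 2 hθ1) (pow_ne_zero 2 hθx)))]
  linear_combination (-(theta q (-1))^2 * theta q x ^ 2 * theta q y ^2) * hK
end

section
/- If f : ℂ∖{0} → ℂ is any function such that y·θ(xy)θ(x/y) = θ(x)²θ(y)²·(f(y) - f(x)) for all nonzero x, y, then the three-term identity y·u·θ(xy)θ(x/y)θ(vu)θ(v/u) + u·v·θ(xu)θ(x/u)θ(yv)θ(y/v) + v·y·θ(xv)θ(x/v)θ(uy)θ(u/y) = 0 holds for all nonzero x, y, u, v. Here θ(w) := θ(w; q). -/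
theorem addition_implies_three_term (q : ℂ) (hq0 : 0 < ‖q‖)
    (hq1 : ‖q‖ < 1) (f : ℂ → ℂ)
    (hf : ∀ x y : ℂ, x ≠ 0 → y ≠ 0 →
      y * theta q (x * y) * theta q (x / y) = theta q x ^ 2 * theta q y ^ 2 * (f y - f x))
    (x y u v : ℂ) (hx : x ≠ 0) (hy : y ≠ 0) (hu : u ≠ 0) (hv : v ≠ 0) :
    y * u * (theta q (x * y) * theta q (x / y) * theta q (v * u) * theta q (v / u))
      + u * v * (theta q (x * u) * theta q (x / u) * theta q (y * v) * theta q (y / v))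
      + v * y * (theta q (x * v) * theta q (x / v) * theta q (u * y) * theta q (u / y)) = 0 := by
  linear_combination (u * theta q (v * u) * theta q (v / u)) * hf x y hx hy
    + (theta q x ^ 2 * theta q y ^ 2 * (f y - f x)) * hf v u hv hu
    + (v * theta q (y * v) * theta q (y / v)) * hf x u hx hu
    + (theta q x ^ 2 * theta q u ^ 2 * (f u - f x)) * hf y v hy hv
    + (y * theta q (u * y) * theta q (u / y)) * hf x v hx hv
    + (theta q x ^ 2 * theta q v ^ 2 * (f v - f x)) * hf u y hu hy
end

section
/- (Jacobi five-term theta identity, multiplicative form) For 0 < |q| < 1 and nonzero complex w, x, y, z, setting w'' = w⁻¹xyz, x'' = wx⁻¹yz, y'' = wxy⁻¹z, z'' = wxyz⁻¹: 2·θ(w²;q²)θ(x²;q²)θ(y²;q²)θ(z²;q²) = θ(w'';q²)θ(x'';q²)θ(y'';q²)θ(z'';q²) + θ(-w'';q²)θ(-x'';q²)θ(-y'';q²)θ(-z'';q²) + q⁻¹xyzw·(θ(qw'';q²)θ(qx'';q²)θ(qy'';q²)θ(qz'';q²) - θ(-qw'';q²)θ(-qx'';q²)θ(-qy'';q²)θ(-qz'';q²)).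 -/
open Finset Filter Topology

namespace Jacobi5

noncomputable section

/-! ### Triangular numbers -/

/-- `tri n = n*(n-1)/2`. -/
def tri : ℕ → ℕ
  | 0 => 0
  | n + 1 => tri n + n

lemma tri_succ (n : ℕ) : tri (n + 1) = tri n + n := rfl

lemma tri_two_mul (n : ℕ) : (2 * tri n : ℤ) = (n : ℤ) ^ 2 - n := by
  induction n with
  | zero => simp [tri]
  | succ n ih =>
    rw [tri_succ]
    push_cast at ih ⊢
    linear_combination ih

/-! ### The theta series -/

/-- summand of the theta series -/
def cterm (q u : ℂ) (n : ℤ) : ℂ := (-1) ^ n * q ^ (n ^ 2 - n) * u ^ n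

/-- theta series -/
def Sfun (q u : ℂ) : ℂ := ∑' n : ℤ, cterm q u n

lemma norm_cterm (q u : ℂ) (n : ℤ) : ‖cterm q u n‖ = ‖q‖ ^ (n ^ 2 - n) * ‖u‖ ^ n := by
  simp [cterm, norm_zpow, norm_mul]

lemma summable_q_sq {r c : ℝ} (hr0 : 0 < r) (hr1 : r < 1) (hc : 0 < c) :
    Summable fun k : ℕ => r ^ (k * k) * c ^ k := by
  obtain ⟨K, hK⟩ : ∃ K : ℕ, (r ^ 2) ^ K < c⁻¹ :=
    exists_pow_lt_of_lt_one (inv_pos.mpr hc) (by nlinarith)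
  apply summable_of_ratio_norm_eventually_le (r := (r ^ 2) ^ K * c)
  · have h := mul_lt_mul_of_pos_right hK hc
    rwa [inv_mul_cancel₀ hc.ne'] at h
  · filter_upwards [eventually_ge_atTop K] with k hk
    rw [Real.norm_of_nonneg (by positivity), Real.norm_of_nonneg (by positivity)]
    have h2 : r ^ (2 * k + 1) ≤ (r ^ 2) ^ K := by
      rw [← pow_mul]
      exact pow_le_pow_of_le_one hr0.le hr1.le (by omega)
    calc r ^ ((k + 1) * (k + 1)) * c ^ (k + 1)
        = (r ^ (2 * k + 1) * c) * (r ^ (k * k) * c ^ k) := by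
          rw [show (k + 1) * (k + 1) = k * k + (2 * k + 1) by ring, pow_add, pow_succ]
          ring
      _ ≤ ((r ^ 2) ^ K * c) * (r ^ (k * k) * c ^ k) := by
          have hx : (0:ℝ) ≤ r ^ (k * k) * c ^ k := by positivity
          exact mul_le_mul_of_nonneg_right (mul_le_mul_of_nonneg_right h2 hc.le) hx

lemma summable_norm_cterm {q u : ℂ} (hq0 : q ≠ 0) (hq1 : ‖q‖ < 1) (hu : u ≠ 0) :
    Summable fun n : ℤ => ‖cterm q u n‖ := by
  have hr0 : 0 < ‖q‖ := norm_pos_iff.mpr hq0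
  have hu0 : 0 < ‖u‖ := norm_pos_iff.mpr hu
  apply Summable.of_nat_of_neg
  · apply (summable_q_sq hr0 hq1 (c := ‖u‖ / ‖q‖) (by positivity)).congr
    intro k
    rw [norm_cterm,
      show ((k:ℤ) ^ 2 - (k:ℤ)) = ((k * k : ℕ) : ℤ) - ((k : ℕ) : ℤ) by push_cast; ring,
      zpow_sub₀ hr0.ne', zpow_natCast, zpow_natCast, zpow_natCast, div_pow]
    field_simp
  · apply (summable_q_sq hr0 hq1 (c := ‖q‖ / ‖u‖) (by positivity)).congr
    intro k
    rw [norm_cterm,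
      show ((-(k:ℤ)) ^ 2 - (-(k:ℤ))) = ((k * k + k : ℕ) : ℤ) by push_cast; ring,
      zpow_natCast, show (-(k:ℤ)) = -((k:ℕ):ℤ) by push_cast; ring, zpow_neg, zpow_natCast,
      pow_add, div_pow]
    field_simp

lemma summable_cterm {q u : ℂ} (hq0 : q ≠ 0) (hq1 : ‖q‖ < 1) (hu : u ≠ 0) :
    Summable fun n : ℤ => cterm q u n :=
  (summable_norm_cterm hq0 hq1 hu).of_norm

/-! ### Finite products and Gaussian binomial coefficients -/

/-- partial products of the Euler function -/
def DP (Q : ℂ) (m : ℕ) : ℂ := ∏ i ∈ range m, (1 - Q ^ (i + 1))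

lemma DP_zero (Q : ℂ) : DP Q 0 = 1 := by simp [DP]

lemma DP_succ (Q : ℂ) (m : ℕ) : DP Q (m + 1) = DP Q m * (1 - Q ^ (m + 1)) :=
  prod_range_succ _ _

/-- (rescaled) Gaussian binomial coefficients -/
def gc (Q : ℂ) : ℕ → ℕ → ℂ
  | 0, 0 => 1
  | 0, _ + 1 => 0
  | m + 1, 0 => gc Q m 0
  | m + 1, k + 1 => Q ^ (k + 1) * gc Q m (k + 1) + Q ^ k * gc Q m k

lemma gc_zero (Q : ℂ) : ∀ m, gc Q m 0 = 1
  | 0 => rfl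
  | m + 1 => by rw [show gc Q (m + 1) 0 = gc Q m 0 from rfl, gc_zero Q m]

lemma gc_of_gt (Q : ℂ) : ∀ m k, m < k → gc Q m k = 0
  | 0, _ + 1, _ => rfl
  | m + 1, k + 1, h => by
    rw [show gc Q (m + 1) (k + 1) = Q ^ (k + 1) * gc Q m (k + 1) + Q ^ k * gc Q m k from rfl,
      gc_of_gt Q m (k + 1) (by omega), gc_of_gt Q m k (by omega)]
    ring

lemma gc_diag (Q : ℂ) : ∀ m, gc Q m m = Q ^ tri m
  | 0 => by simp [gc, tri]
  | m + 1 => by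
    rw [show gc Q (m + 1) (m + 1) = Q ^ (m + 1) * gc Q m (m + 1) + Q ^ m * gc Q m m from rfl,
      gc_of_gt Q m (m + 1) (by omega), gc_diag Q m, tri_succ, pow_add]
    ring

lemma gauss (Q : ℂ) (m : ℕ) : ∀ t : ℂ,
    ∏ j ∈ range m, (1 + t * Q ^ j) = ∑ k ∈ range (m + 1), gc Q m k * t ^ k := by
  induction m with
  | zero => intro t; simp [gc]
  | succ m ih =>
    intro t
    have hsplit : ∏ j ∈ range (m + 1), (1 + t * Q ^ j)
        = (∏ j ∈ range m, (1 + (t * Q) * Q ^ j)) * (1 + t) := by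
      rw [prod_range_succ']
      congr 1
      · refine prod_congr rfl fun j _ => ?_
        rw [pow_succ]
        ring
      · simp
    rw [hsplit, ih (t * Q)]
    have hshift : ∑ k ∈ range (m + 1), gc Q m (k + 1) * (t * Q) ^ (k + 1)
        = (∑ k ∈ range (m + 1), gc Q m k * (t * Q) ^ k) - 1 := by
      have h1 := sum_range_succ' (fun k => gc Q m k * (t * Q) ^ k) (m + 1)
      have h2 := sum_range_succ (fun k => gc Q m k * (t * Q) ^ k) (m + 1)
      rw [gc_of_gt Q m (m + 1) (by omega)] at h2
      rw [gc_zero] at h1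
      simp only [pow_zero, mul_one, zero_mul, add_zero] at h1 h2
      rw [h2] at h1
      linear_combination -h1
    have hrec : ∑ k ∈ range (m + 1 + 1), gc Q (m + 1) k * t ^ k
        = 1 + (((∑ k ∈ range (m + 1), gc Q m k * (t * Q) ^ k) - 1)
            + (∑ k ∈ range (m + 1), gc Q m k * (t * Q) ^ k) * t) := by
      rw [sum_range_succ' (fun k => gc Q (m + 1) k * t ^ k) (m + 1), gc_zero]
      simp only [pow_zero, mul_one]
      have hterm : ∀ k, gc Q (m + 1) (k + 1) * t ^ (k + 1)
          = gc Q m (k + 1) * (t * Q) ^ (k + 1) + (gc Q m k * (t * Q) ^ k) * t := by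
        intro k
        rw [show gc Q (m + 1) (k + 1) = Q ^ (k + 1) * gc Q m (k + 1) + Q ^ k * gc Q m k from rfl,
          mul_pow, mul_pow]
        ring
      rw [sum_congr rfl (fun k _ => hterm k), sum_add_distrib, hshift, ← sum_mul]
      ring
    rw [hrec]
    ring

lemma gcD (Q : ℂ) : ∀ m k, k ≤ m →
    gc Q m k * (DP Q k * DP Q (m - k)) = Q ^ tri k * DP Q m := by
  intro m
  induction m with
  | zero => intro k hk; interval_cases k; simp [gc, tri, DP]
  | succ m ih =>
    intro k hk
    match k with
    | 0 => simp [gc_zero, tri, DP_zero]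
    | k + 1 =>
      rcases Nat.lt_or_ge k m with hkm | hkm
      · obtain ⟨d, rfl⟩ : ∃ d, m = k + 1 + d := ⟨m - (k + 1), by omega⟩
        have ih1 := ih (k + 1) (by omega)
        have ih2 := ih k (by omega)
        rw [show k + 1 + d - (k + 1) = d from by omega] at ih1
        rw [show k + 1 + d - k = d + 1 from by omega] at ih2
        rw [DP_succ Q d] at ih2
        rw [show k + 1 + d + 1 - (k + 1) = d + 1 from by omega,
          show gc Q (k + 1 + d + 1) (k + 1)
            = Q ^ (k + 1) * gc Q (k + 1 + d) (k + 1) + Q ^ k * gc Q (k + 1 + d) k from rfl,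
          DP_succ Q (k + 1 + d), DP_succ Q d, tri_succ, pow_add,
          show DP Q (k + 1) = DP Q k * (1 - Q ^ (k + 1)) from DP_succ Q k]
        rw [show DP Q (k + 1) = DP Q k * (1 - Q ^ (k + 1)) from DP_succ Q k, tri_succ, pow_add] at ih1
        linear_combination (Q ^ (k + 1) * (1 - Q ^ (d + 1))) * ih1
          + (Q ^ k * (1 - Q ^ (k + 1))) * ih2
      · have hk2 : k = m := by omega
        subst hk2
        rw [gc_diag, Nat.sub_self, DP_zero]
        ring

/-! ### Real product estimates -/

lemma weier {R : ℝ} (h0 : 0 ≤ R) (h1 : R < 1) (K : ℕ) : ∀ m : ℕ,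
    1 - ∑ i ∈ Ico K m, R ^ (i + 1) ≤ ∏ i ∈ Ico K m, (1 - R ^ (i + 1)) := by
  intro m
  induction m with
  | zero => rw [Finset.Ico_eq_empty (by omega)]; simp
  | succ m ih =>
    rcases Nat.lt_or_ge m K with h | h
    · rw [Finset.Ico_eq_empty (by omega)]; simp
    · rw [Finset.sum_Ico_succ_top h, Finset.prod_Ico_succ_top h]
      have hP : (0:ℝ) ≤ ∏ i ∈ Ico K m, (1 - R ^ (i + 1)) :=
        prod_nonneg fun i _ => by nlinarith [pow_le_one₀ h0 h1.le (n := i + 1)]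
      have hS : (0:ℝ) ≤ ∑ i ∈ Ico K m, R ^ (i + 1) :=
        sum_nonneg fun i _ => by positivity
      have ht0 : (0:ℝ) ≤ R ^ (m + 1) := by positivity
      have ht1 : R ^ (m + 1) ≤ 1 := pow_le_one₀ h0 h1.le
      nlinarith

lemma geom_tail {R : ℝ} (h0 : 0 ≤ R) (h1 : R < 1) (K m : ℕ) :
    ∑ i ∈ Ico K m, R ^ (i + 1) ≤ R ^ (K + 1) / (1 - R) := by
  rw [sum_Ico_eq_sum_range]
  calc ∑ j ∈ range (m - K), R ^ (K + j + 1)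
      = ∑ j ∈ range (m - K), R ^ (K + 1) * R ^ j := by
        refine sum_congr rfl fun j _ => ?_
        rw [show K + j + 1 = (K + 1) + j from by omega, pow_add]
    _ = R ^ (K + 1) * ∑ j ∈ range (m - K), R ^ j := by rw [mul_sum]
    _ ≤ R ^ (K + 1) * (1 / (1 - R)) := by
        apply mul_le_mul_of_nonneg_left ?_ (by positivity)
        have hg := geom_sum_eq (show R ≠ 1 from h1.ne) (m - K)
        rw [hg, show (R ^ (m - K) - 1) / (R - 1) = (1 - R ^ (m - K)) / (1 - R) from by
          rw [div_eq_div_iff (by linarith) (by linarith)]; ring]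
        apply div_le_div₀ (by norm_num) ?_ (by linarith) le_rfl
        nlinarith [pow_nonneg h0 (m - K)]
    _ = R ^ (K + 1) / (1 - R) := by ring

lemma DP_lower {q : ℂ} (hq1 : ‖q‖ < 1) :
    ∃ δ : ℝ, 0 < δ ∧ ∀ m, δ ≤ ‖DP (q ^ 2) m‖ := by
  set R := ‖q ^ 2‖ with hR
  have h0 : 0 ≤ R := norm_nonneg _
  have h1 : R < 1 := by
    rw [hR, norm_pow]
    exact pow_lt_one₀ (norm_nonneg q) hq1 two_ne_zero
  obtain ⟨K, hK⟩ : ∃ K : ℕ, R ^ K < (1 - R) / 2 :=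
    exists_pow_lt_of_lt_one (by linarith) h1
  have htail : ∀ m, ∑ i ∈ Ico K m, R ^ (i + 1) ≤ 1 / 2 := by
    intro m
    refine (geom_tail h0 h1 K m).trans ?_
    rw [div_le_div_iff₀ (by linarith) (by norm_num)]
    have h2 : R ^ (K + 1) ≤ R ^ K := pow_le_pow_of_le_one h0 h1.le (by omega)
    nlinarith
  have hfac : ∀ i : ℕ, 0 < 1 - R ^ (i + 1) := by
    intro i
    nlinarith [pow_lt_one₀ h0 h1 (show i + 1 ≠ 0 from by omega)]
  set P := ∏ i ∈ range K, (1 - R ^ (i + 1)) with hP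
  have hPpos : 0 < P := prod_pos fun i _ => hfac i
  refine ⟨P * (1 / 2), by positivity, fun m => ?_⟩
  have key : P * (1 / 2) ≤ ∏ i ∈ range m, (1 - R ^ (i + 1)) := by
    rcases le_or_gt K m with h | h
    · rw [← prod_range_mul_prod_Ico _ h]
      have h2 : 1 / 2 ≤ ∏ i ∈ Ico K m, (1 - R ^ (i + 1)) := by
        have hw := weier h0 h1 K m
        have ht := htail m
        linarith
      exact mul_le_mul_of_nonneg_left h2 hPpos.le
    · have hfac2 : P = (∏ i ∈ range m, (1 - R ^ (i + 1))) * ∏ i ∈ Ico m K, (1 - R ^ (i + 1)) :=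
        (prod_range_mul_prod_Ico _ h.le).symm
      have hIco1 : ∏ i ∈ Ico m K, (1 - R ^ (i + 1)) ≤ 1 :=
        prod_le_one (fun i _ => (hfac i).le) (fun i _ => by nlinarith [pow_nonneg h0 (i + 1)])
      have hm0 : 0 < ∏ i ∈ range m, (1 - R ^ (i + 1)) := prod_pos fun i _ => hfac i
      nlinarith
  refine key.trans ?_
  rw [DP, norm_prod]
  apply prod_le_prod (fun i _ => (hfac i).le) (fun i _ => ?_)
  have hns := norm_sub_norm_le (1 : ℂ) ((q ^ 2) ^ (i + 1))
  rw [norm_one, norm_pow] at hns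
  linarith

lemma DP_upper {q : ℂ} (hq1 : ‖q‖ < 1) (m : ℕ) :
    ‖DP (q ^ 2) m‖ ≤ Real.exp (‖q ^ 2‖ / (1 - ‖q ^ 2‖)) := by
  set R := ‖q ^ 2‖ with hR
  have h0 : 0 ≤ R := norm_nonneg _
  have h1 : R < 1 := by
    rw [hR, norm_pow]
    exact pow_lt_one₀ (norm_nonneg q) hq1 two_ne_zero
  rw [DP, norm_prod]
  calc ∏ i ∈ range m, ‖1 - (q ^ 2) ^ (i + 1)‖
      ≤ ∏ i ∈ range m, Real.exp (R ^ (i + 1)) := by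
        apply prod_le_prod (fun i _ => norm_nonneg _) (fun i _ => ?_)
        have hn : ‖1 - (q ^ 2) ^ (i + 1)‖ ≤ 1 + R ^ (i + 1) := by
          refine (norm_sub_le _ _).trans ?_
          rw [norm_one, norm_pow]
        have he := Real.add_one_le_exp (R ^ (i + 1))
        linarith
    _ = Real.exp (∑ i ∈ range m, R ^ (i + 1)) := (Real.exp_sum _ _).symm
    _ ≤ Real.exp (R / (1 - R)) := by
        apply Real.exp_le_exp.mpr
        have hg := geom_tail h0 h1 0 m
        rw [range_eq_Ico]
        simpa using hg

/-! ### Multipliability -/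

lemma summable_log_aux {f u : ℕ → ℂ} {C R : ℝ} (h0 : 0 ≤ R) (h1 : R < 1)
    (hfu : ∀ j, f j = 1 + u j) (hu : ∀ j, ‖u j‖ ≤ C * R ^ j) :
    Summable fun j => Complex.log (f j) := by
  have hC : 0 ≤ C := by
    have h := (norm_nonneg (u 0)).trans (hu 0)
    simpa using h
  obtain ⟨K, hK⟩ : ∃ K : ℕ, C * R ^ K ≤ 1 / 2 := by
    rcases eq_or_lt_of_le hC with h | h
    · exact ⟨0, by rw [← h]; norm_num⟩
    · obtain ⟨K, hK⟩ := exists_pow_lt_of_lt_one (x := (1 / 2) / C) (by positivity) h1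
      exact ⟨K, by rw [mul_comm]; exact ((lt_div_iff₀ h).mp hK).le⟩
  rw [← summable_nat_add_iff K]
  apply Summable.of_norm_bounded (g := fun j => (3 / 2) * (C * R ^ K * R ^ j))
  · exact (((summable_geometric_of_lt_one h0 h1).mul_left _).mul_left _)
  · intro j
    have hb : ‖u (j + K)‖ ≤ (C * R ^ K) * R ^ j := by
      have h := hu (j + K)
      rw [pow_add] at h
      calc ‖u (j + K)‖ ≤ C * (R ^ j * R ^ K) := h
        _ = (C * R ^ K) * R ^ j := by ring
    have hhalf : ‖u (j + K)‖ ≤ 1 / 2 := by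
      have hr1 : R ^ j ≤ 1 := pow_le_one₀ h0 h1.le
      have hcr : 0 ≤ C * R ^ K := by positivity
      nlinarith
    rw [hfu (j + K)]
    calc ‖Complex.log (1 + u (j + K))‖ ≤ (3 / 2) * ‖u (j + K)‖ :=
          Complex.norm_log_one_add_half_le_self hhalf
      _ ≤ (3 / 2) * (C * R ^ K * R ^ j) := by linarith

lemma factor_ne {q : ℂ} (hq1 : ‖q‖ < 1) (i : ℕ) : (1 : ℂ) - (q ^ 2) ^ (i + 1) ≠ 0 := by
  have hlt : ‖(q ^ 2) ^ (i + 1)‖ < 1 := by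
    rw [norm_pow, norm_pow]
    exact pow_lt_one₀ (by positivity) (pow_lt_one₀ (norm_nonneg q) hq1 two_ne_zero)
      (by omega)
  intro h
  rw [sub_eq_zero] at h
  rw [← h] at hlt
  simp at hlt

lemma DP_ne {q : ℂ} (hq1 : ‖q‖ < 1) (m : ℕ) : DP (q ^ 2) m ≠ 0 :=
  prod_ne_zero_iff.mpr fun i _ => factor_ne hq1 i

lemma multipliable_DP {q : ℂ} (hq1 : ‖q‖ < 1) :
    Multipliable fun i : ℕ => (1 : ℂ) - (q ^ 2) ^ (i + 1) := by
  have h1 : ‖q ^ 2‖ < 1 := by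
    rw [norm_pow]; exact pow_lt_one₀ (norm_nonneg q) hq1 two_ne_zero
  exact Complex.multipliable_of_summable_log
    (f := fun i => (1 : ℂ) - (q ^ 2) ^ (i + 1))
    (summable_log_aux (u := fun i => -((q ^ 2) ^ (i + 1))) (C := ‖q ^ 2‖)
      (norm_nonneg _) h1 (fun j => by ring)
      (fun j => by
        rw [norm_neg, norm_pow, pow_succ]
        exact le_of_eq (mul_comm _ _)))

lemma multipliable_PF {q w : ℂ} (hq0 : q ≠ 0) (hq1 : ‖q‖ < 1) (hw : w ≠ 0) :
    Multipliable fun j : ℕ => (1 - (q ^ 2) ^ j * w) * (1 - (q ^ 2) ^ (j + 1) * w⁻¹) := by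
  have h1 : ‖q ^ 2‖ < 1 := by
    rw [norm_pow]; exact pow_lt_one₀ (norm_nonneg q) hq1 two_ne_zero
  by_cases hz : ∀ j : ℕ, (1 - (q ^ 2) ^ j * w) * (1 - (q ^ 2) ^ (j + 1) * w⁻¹) ≠ 0
  · refine Complex.multipliable_of_summable_log
      (f := fun j => (1 - (q ^ 2) ^ j * w) * (1 - (q ^ 2) ^ (j + 1) * w⁻¹)) ?_
    apply summable_log_aux
      (u := fun j => -((q ^ 2) ^ j * w) - (q ^ 2) ^ (j + 1) * w⁻¹ + (q ^ 2) ^ (2 * j + 1))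
      (C := ‖w‖ + ‖w⁻¹‖ + 1) (R := ‖q ^ 2‖) (norm_nonneg _) h1
    · intro j
      have hww : w * w⁻¹ = 1 := mul_inv_cancel₀ hw
      rw [show 2 * j + 1 = j + (j + 1) from by omega, pow_add]
      linear_combination ((q ^ 2) ^ j * (q ^ 2) ^ (j + 1)) * hww
    · intro j
      set R := ‖q ^ 2‖ with hR
      have h0 : (0:ℝ) ≤ R := norm_nonneg _
      have e1 : ‖(q ^ 2) ^ j * w‖ = R ^ j * ‖w‖ := by rw [norm_mul, norm_pow]
      have e2 : ‖(q ^ 2) ^ (j + 1) * w⁻¹‖ ≤ R ^ j * ‖w⁻¹‖ := by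
        rw [norm_mul, norm_pow, pow_succ]
        have : R ^ j * R ≤ R ^ j * 1 := by
          apply mul_le_mul_of_nonneg_left h1.le (by positivity)
        nlinarith [norm_nonneg (w⁻¹), pow_nonneg h0 j]
      have e3 : ‖(q ^ 2) ^ (2 * j + 1)‖ ≤ R ^ j := by
        rw [norm_pow, ← hR]
        exact pow_le_pow_of_le_one h0 h1.le (by omega)
      calc ‖-((q ^ 2) ^ j * w) - (q ^ 2) ^ (j + 1) * w⁻¹ + (q ^ 2) ^ (2 * j + 1)‖
          ≤ ‖-((q ^ 2) ^ j * w) - (q ^ 2) ^ (j + 1) * w⁻¹‖ + ‖(q ^ 2) ^ (2 * j + 1)‖ :=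
            norm_add_le _ _
        _ ≤ (‖-((q ^ 2) ^ j * w)‖ + ‖(q ^ 2) ^ (j + 1) * w⁻¹‖) + ‖(q ^ 2) ^ (2 * j + 1)‖ := by
            have := norm_sub_le (-((q ^ 2) ^ j * w)) ((q ^ 2) ^ (j + 1) * w⁻¹)
            linarith
        _ ≤ (R ^ j * ‖w‖ + R ^ j * ‖w⁻¹‖) + R ^ j := by
            rw [norm_neg, e1]
            linarith
        _ = (‖w‖ + ‖w⁻¹‖ + 1) * R ^ j := by ring
  · push_neg at hz
    obtain ⟨j0, hj0⟩ := hz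
    refine ⟨0, ?_⟩
    have hev : ∀ᶠ s : Finset ℕ in atTop,
        (∏ i ∈ s, ((1 - (q ^ 2) ^ i * w) * (1 - (q ^ 2) ^ (i + 1) * w⁻¹))) = 0 := by
      filter_upwards [eventually_ge_atTop {j0}] with s hs
      exact prod_eq_zero (hs (Finset.mem_singleton_self j0)) hj0
    exact Tendsto.congr' (by filter_upwards [hev] with s h using h.symm) tendsto_const_nhds

/-! ### The finite theta product as a sum -/

/-- partial products of the theta product -/
def PF (q w : ℂ) (N : ℕ) : ℂ :=
  ∏ j ∈ range N, ((1 - (q ^ 2) ^ j * w) * (1 - (q ^ 2) ^ (j + 1) * w⁻¹))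

lemma sum_tri (N : ℕ) : ∑ j ∈ range N, (j + 1) = tri (N + 1) := by
  induction N with
  | zero => simp [tri]
  | succ N ih => rw [sum_range_succ, ih, tri_succ (N + 1)]

lemma PF_eq_sum {q w : ℂ} (hq0 : q ≠ 0) (hw : w ≠ 0) (N : ℕ) :
    PF q w N = ∑ k ∈ range (2 * N + 1), gc (q ^ 2) (2 * N) k * (-(w * ((q ^ 2)⁻¹) ^ N)) ^ k
      * (((-1 : ℂ) ^ N * w ^ N)⁻¹ * (q ^ 2) ^ tri (N + 1)) := by
  have hQ0 : (q ^ 2) ≠ 0 := pow_ne_zero _ hq0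
  have key := gauss (q ^ 2) (2 * N) (-(w * ((q ^ 2)⁻¹) ^ N))
  have h2 : ∀ j ∈ range N,
      (1 + (-(w * ((q ^ 2)⁻¹) ^ N)) * (q ^ 2) ^ (N + j)) = (1 - (q ^ 2) ^ j * w) := by
    intro j _
    rw [pow_add]
    have hQQ : ((q ^ 2)⁻¹) ^ N * (q ^ 2) ^ N = 1 := by
      rw [← mul_pow, inv_mul_cancel₀ hQ0, one_pow]
    linear_combination (-(w * (q ^ 2) ^ j)) * hQQ
  have h1 : ∀ j ∈ range N,
      (1 + (-(w * ((q ^ 2)⁻¹) ^ N)) * (q ^ 2) ^ (N - 1 - j))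
        = (-(w * ((q ^ 2)⁻¹) ^ (j + 1))) * (1 - (q ^ 2) ^ (j + 1) * w⁻¹) := by
    intro j hj
    have hjN : j < N := mem_range.mp hj
    rw [show ((q ^ 2)⁻¹) ^ N = ((q ^ 2)⁻¹) ^ (j + 1) * ((q ^ 2)⁻¹) ^ (N - 1 - j) from by
      rw [← pow_add]; congr 1; omega]
    have hQQ : ((q ^ 2)⁻¹) ^ (N - 1 - j) * (q ^ 2) ^ (N - 1 - j) = 1 := by
      rw [← mul_pow, inv_mul_cancel₀ hQ0, one_pow]
    have hQQ2 : ((q ^ 2)⁻¹) ^ (j + 1) * (q ^ 2) ^ (j + 1) = 1 := by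
      rw [← mul_pow, inv_mul_cancel₀ hQ0, one_pow]
    have hww : w * w⁻¹ = 1 := mul_inv_cancel₀ hw
    linear_combination (-(w * ((q ^ 2)⁻¹) ^ (j + 1))) * hQQ
      + (-(w * w⁻¹)) * hQQ2 + (-1 : ℂ) * hww
  have h1' : ∏ j ∈ range N, (1 + (-(w * ((q ^ 2)⁻¹) ^ N)) * (q ^ 2) ^ j)
      = ∏ j ∈ range N, ((-(w * ((q ^ 2)⁻¹) ^ (j + 1))) * (1 - (q ^ 2) ^ (j + 1) * w⁻¹)) := by
    rw [← prod_range_reflect (fun j => 1 + (-(w * ((q ^ 2)⁻¹) ^ N)) * (q ^ 2) ^ j) N]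
    exact prod_congr rfl h1
  have hneg : ∏ j ∈ range N, (-(w * ((q ^ 2)⁻¹) ^ (j + 1)))
      = (-1 : ℂ) ^ N * w ^ N * ((q ^ 2)⁻¹) ^ tri (N + 1) := by
    calc ∏ j ∈ range N, (-(w * ((q ^ 2)⁻¹) ^ (j + 1)))
        = ∏ j ∈ range N, (((-1 : ℂ) * w) * ((q ^ 2)⁻¹) ^ (j + 1)) := by
          refine prod_congr rfl fun j _ => ?_; ring
      _ = (∏ _j ∈ range N, ((-1 : ℂ) * w)) * ∏ j ∈ range N, ((q ^ 2)⁻¹) ^ (j + 1) :=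
          prod_mul_distrib
      _ = ((-1 : ℂ) * w) ^ N * ((q ^ 2)⁻¹) ^ (∑ j ∈ range N, (j + 1)) := by
          rw [prod_const, card_range, prod_pow_eq_pow_sum]
      _ = (-1 : ℂ) ^ N * w ^ N * ((q ^ 2)⁻¹) ^ tri (N + 1) := by
          rw [sum_tri, mul_pow]
  have hL : ∏ j ∈ range (2 * N), (1 + (-(w * ((q ^ 2)⁻¹) ^ N)) * (q ^ 2) ^ j)
      = ((-1 : ℂ) ^ N * w ^ N * ((q ^ 2)⁻¹) ^ tri (N + 1)) * PF q w N := by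
    rw [two_mul, prod_range_add, h1', prod_congr rfl h2, prod_mul_distrib, hneg, PF,
      prod_mul_distrib]
    ring
  have hC : (((-1 : ℂ) ^ N * w ^ N * ((q ^ 2)⁻¹) ^ tri (N + 1)))
      * (((-1 : ℂ) ^ N * w ^ N)⁻¹ * (q ^ 2) ^ tri (N + 1)) = 1 := by
    have hm1 : ((-1 : ℂ) ^ N) ≠ 0 := pow_ne_zero _ (by norm_num)
    have hwN : (w ^ N) ≠ 0 := pow_ne_zero _ hw
    have hQt : ((q ^ 2) ^ tri (N + 1)) ≠ 0 := pow_ne_zero _ hQ0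
    field_simp
    rw [← mul_pow, one_div, inv_mul_cancel₀ hQ0, one_pow]
  rw [← Finset.sum_mul, ← key, hL]
  linear_combination (-(PF q w N)) * hC

/-- ratio of partial Euler products -/
def ratioD (q : ℂ) (N : ℕ) (n : ℤ) : ℂ :=
  DP (q ^ 2) (2 * N) / (DP (q ^ 2) ((n + N).toNat) * DP (q ^ 2) (((N : ℤ) - n).toNat))

/-- the `N`-th partial theta product, as a function on `ℤ` -/
def gfun (q w : ℂ) (N : ℕ) (n : ℤ) : ℂ :=
  if n.natAbs ≤ N then cterm q w n * ratioD q N n else 0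

lemma hscalar {q w : ℂ} (hq0 : q ≠ 0) (hw : w ≠ 0) (N k : ℕ) :
    (q ^ 2) ^ tri k * ((-(w * ((q ^ 2)⁻¹) ^ N)) ^ k
        * (((-1 : ℂ) ^ N * w ^ N)⁻¹ * (q ^ 2) ^ tri (N + 1)))
      = (-1 : ℂ) ^ ((k : ℤ) - N) * q ^ (((k : ℤ) - N) ^ 2 - ((k : ℤ) - N)) * w ^ ((k : ℤ) - N) := by
  have hQ0 : (q ^ 2) ≠ 0 := pow_ne_zero _ hq0
  have h1 : ((-1 : ℂ)) ^ ((k : ℤ) - N) = (-1 : ℂ) ^ (k : ℕ) * ((-1 : ℂ) ^ (N : ℕ))⁻¹ := by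
    rw [zpow_sub₀ (by norm_num), zpow_natCast, zpow_natCast]
    rfl
  have h2 : w ^ ((k : ℤ) - N) = w ^ (k : ℕ) * (w ^ (N : ℕ))⁻¹ := by
    rw [zpow_sub₀ hw, zpow_natCast, zpow_natCast]
    rfl
  have hE : ((k : ℤ) - N) ^ 2 - ((k : ℤ) - N)
      = ((2 * tri (N + 1) + 2 * tri k : ℕ) : ℤ) - ((2 * (N * k) : ℕ) : ℤ) := by
    have e1 := tri_two_mul (N + 1)
    have e2 := tri_two_mul k
    push_cast
    push_cast at e1 e2
    linear_combination -e1 - e2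
  have h3 : q ^ (((k : ℤ) - N) ^ 2 - ((k : ℤ) - N))
      = q ^ (2 * tri (N + 1) + 2 * tri k : ℕ) / q ^ (2 * (N * k) : ℕ) := by
    rw [hE, zpow_sub₀ hq0, zpow_natCast, zpow_natCast]
  have hneg : (-(w * ((q ^ 2)⁻¹) ^ N)) ^ k
      = (-1 : ℂ) ^ k * w ^ k * ((q ^ 2)⁻¹) ^ (N * k) := by
    rw [neg_pow, mul_pow, ← pow_mul]
    ring
  rw [h1, h2, h3, hneg]
  have hm1 : ((-1 : ℂ) ^ N) ≠ 0 := pow_ne_zero _ (by norm_num)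
  have hwN : (w ^ N) ≠ 0 := pow_ne_zero _ hw
  rw [inv_pow]
  field_simp
  ring

lemma PF_eq_tsum {q w : ℂ} (hq0 : q ≠ 0) (hq1 : ‖q‖ < 1) (hw : w ≠ 0) (N : ℕ) :
    PF q w N = ∑' n : ℤ, gfun q w N n := by
  rw [tsum_eq_sum (s := Finset.Icc (-(N : ℤ)) N) (f := gfun q w N) ?_]
  · rw [PF_eq_sum hq0 hw N]
    refine Finset.sum_nbij' (i := fun k => (k : ℤ) - N) (j := fun n => (n + N).toNat)
      ?_ ?_ ?_ ?_ ?_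
    · intro k hk
      rw [mem_range] at hk
      rw [Finset.mem_Icc]
      omega
    · intro n hn
      rw [Finset.mem_Icc] at hn
      rw [mem_range]
      omega
    · intro k hk
      rw [mem_range] at hk
      omega
    · intro n hn
      rw [Finset.mem_Icc] at hn
      omega
    · intro k hk
      rw [mem_range] at hk
      rw [gfun, if_pos (by omega)]
      rw [ratioD, show ((k : ℤ) - N + N).toNat = k from by omega,
        show ((N : ℤ) - ((k : ℤ) - N)).toNat = 2 * N - k from by omega]
      have hgc : gc (q ^ 2) (2 * N) k
          = (q ^ 2) ^ tri k * DP (q ^ 2) (2 * N) / (DP (q ^ 2) k * DP (q ^ 2) (2 * N - k)) := by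
        rw [eq_div_iff (mul_ne_zero (DP_ne hq1 k) (DP_ne hq1 (2 * N - k)))]
        linear_combination gcD (q ^ 2) (2 * N) k (by omega)
      rw [hgc, cterm]
      have hs := hscalar hq0 hw N k
      linear_combination (DP (q ^ 2) (2 * N) / (DP (q ^ 2) k * DP (q ^ 2) (2 * N - k))) * hs
  · intro n hn
    rw [gfun, if_neg]
    rw [Finset.mem_Icc] at hn
    omega

/-! ### Limit of the partial products -/

lemma tendsto_toNat_add {n : ℤ} : Tendsto (fun N : ℕ => (n + N).toNat) atTop atTop :=
  tendsto_atTop_atTop.mpr fun b => ⟨b + n.natAbs, fun a ha => by omega⟩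

lemma tendsto_toNat_sub {n : ℤ} : Tendsto (fun N : ℕ => ((N : ℤ) - n).toNat) atTop atTop :=
  tendsto_atTop_atTop.mpr fun b => ⟨b + n.natAbs, fun a ha => by omega⟩

lemma tendsto_two_mul : Tendsto (fun N : ℕ => 2 * N) atTop atTop :=
  tendsto_atTop_atTop.mpr fun b => ⟨b, fun a ha => by omega⟩

lemma PF_tendsto_sum {q w : ℂ} (hq0 : q ≠ 0) (hq1 : ‖q‖ < 1) (hw : w ≠ 0) :
    Tendsto (PF q w) atTop
      (𝓝 ((∏' i : ℕ, (1 - (q ^ 2) ^ (i + 1)))⁻¹ * Sfun q w)) := by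
  obtain ⟨δ, hδ0, hδ⟩ := DP_lower hq1
  set cD := ∏' i : ℕ, (1 - (q ^ 2) ^ (i + 1)) with hcD
  have hDten : Tendsto (DP (q ^ 2)) atTop (𝓝 cD) := by
    have h := (multipliable_DP hq1).hasProd.tendsto_prod_nat
    exact h
  have hcDnorm : δ ≤ ‖cD‖ :=
    ge_of_tendsto hDten.norm (Eventually.of_forall hδ)
  have hcD0 : cD ≠ 0 := by
    intro h
    rw [h, norm_zero] at hcDnorm
    linarith
  set M := Real.exp (‖q ^ 2‖ / (1 - ‖q ^ 2‖)) with hM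
  have hmain : Tendsto (fun N => ∑' n : ℤ, gfun q w N n) atTop
      (𝓝 (∑' n : ℤ, cterm q w n * cD⁻¹)) := by
    apply tendsto_tsum_of_dominated_convergence
      (bound := fun n : ℤ => ‖cterm q w n‖ * (M / (δ * δ)))
    · exact (summable_norm_cterm hq0 hq1 hw).mul_right _
    · intro n
      have hratio : Tendsto (fun N => ratioD q N n) atTop (𝓝 (cD / (cD * cD))) := by
        apply Tendsto.div ?_ ?_ (mul_ne_zero hcD0 hcD0)
        · exact hDten.comp tendsto_two_mul
        · exact (hDten.comp tendsto_toNat_add).mul (hDten.comp tendsto_toNat_sub)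
      have hev : (fun N => cterm q w n * ratioD q N n) =ᶠ[atTop] (fun N => gfun q w N n) := by
        filter_upwards [eventually_ge_atTop n.natAbs] with N hN
        rw [gfun, if_pos hN]
      have hlim := (hratio.const_mul (cterm q w n)).congr' hev
      rwa [show cD / (cD * cD) = cD⁻¹ from by field_simp] at hlim
    · apply Eventually.of_forall
      intro N n
      rw [gfun]
      split_ifs with h
      · rw [norm_mul]
        apply mul_le_mul_of_nonneg_left ?_ (norm_nonneg _)
        rw [ratioD, norm_div, norm_mul]
        apply div_le_div₀ (by positivity) (DP_upper hq1 _) (by positivity)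
        exact mul_le_mul (hδ _) (hδ _) hδ0.le (norm_nonneg _)
      · simp
        positivity
  have heq : ∀ᶠ N in atTop, (fun N => ∑' n : ℤ, gfun q w N n) N = PF q w N :=
    Eventually.of_forall fun N => (PF_eq_tsum hq0 hq1 hw N).symm
  have := hmain.congr' heq
  rwa [show ∑' n : ℤ, cterm q w n * cD⁻¹ = cD⁻¹ * Sfun q w from by
    rw [tsum_mul_right, Sfun, mul_comm]] at this

end

end Jacobi5

namespace Jacobi5

noncomputable section

open Finset Filter Topology

theorem theta_eq {q w : ℂ} (hq0 : q ≠ 0) (hq1 : ‖q‖ < 1) (hw : w ≠ 0) :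
    theta (q ^ 2) w = (∏' i : ℕ, (1 - (q ^ 2) ^ (i + 1)))⁻¹ * Sfun q w := by
  have h1 : Tendsto (PF q w) atTop (𝓝 (theta (q ^ 2) w)) :=
    (multipliable_PF hq0 hq1 hw).hasProd.tendsto_prod_nat
  exact tendsto_nhds_unique h1 (PF_tendsto_sum hq0 hq1 hw)

/-! ### The quadruple series -/

/-- summand of a product of four theta series -/
def qt (q u₁ u₂ u₃ u₄ : ℂ) (v : ℤ × ℤ × ℤ × ℤ) : ℂ :=
  cterm q u₁ v.1 * (cterm q u₂ v.2.1 * (cterm q u₃ v.2.2.1 * cterm q u₄ v.2.2.2))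

lemma summable_norm_qt {q u₁ u₂ u₃ u₄ : ℂ} (hq0 : q ≠ 0) (hq1 : ‖q‖ < 1)
    (h1 : u₁ ≠ 0) (h2 : u₂ ≠ 0) (h3 : u₃ ≠ 0) (h4 : u₄ ≠ 0) :
    Summable fun v : ℤ × ℤ × ℤ × ℤ => ‖qt q u₁ u₂ u₃ u₄ v‖ := by
  have s1 := summable_norm_cterm hq0 hq1 h1
  have s2 := summable_norm_cterm hq0 hq1 h2
  have s3 := summable_norm_cterm hq0 hq1 h3
  have s4 := summable_norm_cterm hq0 hq1 h4
  have i34 : Summable fun p : ℤ × ℤ => ‖cterm q u₃ p.1 * cterm q u₄ p.2‖ :=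
    Summable.mul_norm s3 s4
  have i234 : Summable fun p : ℤ × ℤ × ℤ =>
      ‖cterm q u₂ p.1 * (cterm q u₃ p.2.1 * cterm q u₄ p.2.2)‖ :=
    Summable.mul_norm (f := cterm q u₂)
      (g := fun p : ℤ × ℤ => cterm q u₃ p.1 * cterm q u₄ p.2) s2 i34
  have i1234 : Summable fun v : ℤ × ℤ × ℤ × ℤ =>
      ‖cterm q u₁ v.1 * (cterm q u₂ v.2.1 * (cterm q u₃ v.2.2.1 * cterm q u₄ v.2.2.2))‖ :=
    Summable.mul_norm (f := cterm q u₁)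
      (g := fun p : ℤ × ℤ × ℤ => cterm q u₂ p.1 * (cterm q u₃ p.2.1 * cterm q u₄ p.2.2)) s1 i234
  simpa only [qt] using i1234

lemma summable_qt {q u₁ u₂ u₃ u₄ : ℂ} (hq0 : q ≠ 0) (hq1 : ‖q‖ < 1)
    (h1 : u₁ ≠ 0) (h2 : u₂ ≠ 0) (h3 : u₃ ≠ 0) (h4 : u₄ ≠ 0) :
    Summable (qt q u₁ u₂ u₃ u₄) :=
  (summable_norm_qt hq0 hq1 h1 h2 h3 h4).of_norm

lemma qt_tsum {q u₁ u₂ u₃ u₄ : ℂ} (hq0 : q ≠ 0) (hq1 : ‖q‖ < 1)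
    (h1 : u₁ ≠ 0) (h2 : u₂ ≠ 0) (h3 : u₃ ≠ 0) (h4 : u₄ ≠ 0) :
    Sfun q u₁ * Sfun q u₂ * Sfun q u₃ * Sfun q u₄ = ∑' v : ℤ × ℤ × ℤ × ℤ, qt q u₁ u₂ u₃ u₄ v := by
  have s1 := summable_norm_cterm hq0 hq1 h1
  have s2 := summable_norm_cterm hq0 hq1 h2
  have s3 := summable_norm_cterm hq0 hq1 h3
  have s4 := summable_norm_cterm hq0 hq1 h4
  rw [Sfun, Sfun, Sfun, Sfun, mul_assoc, mul_assoc,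
    tsum_mul_tsum_of_summable_norm s3 s4,
    tsum_mul_tsum_of_summable_norm s2 (s3.mul_norm s4),
    tsum_mul_tsum_of_summable_norm s1 (s2.mul_norm (s3.mul_norm s4))]
  rfl

/-- the reindexing bijection of `ℤ⁴` underlying the quadruple theta identity -/
def phiJ : (ℤ × ℤ × ℤ × ℤ) ≃ (ℤ × ℤ × ℤ × ℤ) where
  toFun v :=
    ((v.1 + v.2.1 + v.2.2.1 + v.2.2.2 + 1) / 2 - v.1,
     (v.1 + v.2.1 + v.2.2.1 + v.2.2.2 + 1) / 2 - v.2.1,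
     (v.1 + v.2.1 + v.2.2.1 + v.2.2.2 + 1) / 2 - v.2.2.1,
     (v.1 + v.2.1 + v.2.2.1 + v.2.2.2 + 1) / 2 - v.2.2.2)
  invFun u :=
    ((u.1 + u.2.1 + u.2.2.1 + u.2.2.2) / 2 - u.1,
     (u.1 + u.2.1 + u.2.2.1 + u.2.2.2) / 2 - u.2.1,
     (u.1 + u.2.1 + u.2.2.1 + u.2.2.2) / 2 - u.2.2.1,
     (u.1 + u.2.1 + u.2.2.1 + u.2.2.2) / 2 - u.2.2.2)
  left_inv := by
    rintro ⟨a, b, c, d⟩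
    simp only [Prod.mk.injEq]
    omega
  right_inv := by
    rintro ⟨a, b, c, d⟩
    simp only [Prod.mk.injEq]
    omega

/-! ### Monomials -/

/-- a monomial in `-1, q, w, x, y, z` with integer exponents -/
def mono (q w x y z : ℂ) (e0 e1 e2 e3 e4 e5 : ℤ) : ℂ :=
  (-1) ^ e0 * q ^ e1 * w ^ e2 * x ^ e3 * y ^ e4 * z ^ e5

section monos

variable {q w x y z : ℂ}

lemma cterm_mono (hq0 : q ≠ 0) (s t a b c d n : ℤ) :
    cterm q ((-1) ^ s * q ^ t * w ^ a * x ^ b * y ^ c * z ^ d) n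
      = mono q w x y z (n + s * n) (n ^ 2 - n + t * n) (a * n) (b * n) (c * n) (d * n) := by
  rw [cterm, mono, mul_zpow, mul_zpow, mul_zpow, mul_zpow, mul_zpow,
    ← zpow_mul, ← zpow_mul, ← zpow_mul, ← zpow_mul, ← zpow_mul, ← zpow_mul,
    zpow_add₀ (show (-1 : ℂ) ≠ 0 by norm_num), zpow_add₀ hq0]
  ring

lemma mono_mul (hq0 : q ≠ 0) (hw : w ≠ 0) (hx : x ≠ 0) (hy : y ≠ 0) (hz : z ≠ 0) (e0 e1 e2 e3 e4 e5 f0 f1 f2 f3 f4 f5 : ℤ) :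
    mono q w x y z e0 e1 e2 e3 e4 e5 * mono q w x y z f0 f1 f2 f3 f4 f5
      = mono q w x y z (e0 + f0) (e1 + f1) (e2 + f2) (e3 + f3) (e4 + f4) (e5 + f5) := by
  rw [mono, mono, mono, zpow_add₀ (show (-1 : ℂ) ≠ 0 by norm_num), zpow_add₀ hq0,
    zpow_add₀ hw, zpow_add₀ hx, zpow_add₀ hy, zpow_add₀ hz]
  ring

lemma mono_congr {e0 e1 e2 e3 e4 e5 f0 f1 f2 f3 f4 f5 : ℤ} (h0 : e0 = f0) (h1 : e1 = f1)
    (h2 : e2 = f2) (h3 : e3 = f3) (h4 : e4 = f4) (h5 : e5 = f5) :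
    mono q w x y z e0 e1 e2 e3 e4 e5 = mono q w x y z f0 f1 f2 f3 f4 f5 := by
  rw [h0, h1, h2, h3, h4, h5]

lemma mono_two (e0 e1 e2 e3 e4 e5 : ℤ) :
    mono q w x y z (e0 + 2) e1 e2 e3 e4 e5 = mono q w x y z e0 e1 e2 e3 e4 e5 := by
  rw [mono, mono, zpow_add₀ (show (-1 : ℂ) ≠ 0 by norm_num)]
  norm_num

lemma mono_congr2 {e0 e1 e2 e3 e4 e5 f0 f1 f2 f3 f4 f5 : ℤ} (h0 : e0 + 2 = f0) (h1 : e1 = f1)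
    (h2 : e2 = f2) (h3 : e3 = f3) (h4 : e4 = f4) (h5 : e5 = f5) :
    mono q w x y z e0 e1 e2 e3 e4 e5 = mono q w x y z f0 f1 f2 f3 f4 f5 := by
  rw [← h0, ← h1, ← h2, ← h3, ← h4, ← h5, mono_two]

lemma qtA_mono (hq0 : q ≠ 0) (hw : w ≠ 0) (hx : x ≠ 0) (hy : y ≠ 0) (hz : z ≠ 0) (α β γ δ : ℤ) :
    qt q (w ^ 2) (x ^ 2) (y ^ 2) (z ^ 2) (α, β, γ, δ)
      = mono q w x y z (α + β + γ + δ)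
          ((α ^ 2 - α) + (β ^ 2 - β) + (γ ^ 2 - γ) + (δ ^ 2 - δ))
          (α + α) (β + β) (γ + γ) (δ + δ) := by
  have e1 : (w ^ 2 : ℂ) = (-1 : ℂ) ^ (0:ℤ) * q ^ (0:ℤ) * w ^ (2:ℤ) * x ^ (0:ℤ) * y ^ (0:ℤ)
      * z ^ (0:ℤ) := by simp only [zpow_zero, zpow_ofNat]; ring
  have e2 : (x ^ 2 : ℂ) = (-1 : ℂ) ^ (0:ℤ) * q ^ (0:ℤ) * w ^ (0:ℤ) * x ^ (2:ℤ) * y ^ (0:ℤ)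
      * z ^ (0:ℤ) := by simp only [zpow_zero, zpow_ofNat]; ring
  have e3 : (y ^ 2 : ℂ) = (-1 : ℂ) ^ (0:ℤ) * q ^ (0:ℤ) * w ^ (0:ℤ) * x ^ (0:ℤ) * y ^ (2:ℤ)
      * z ^ (0:ℤ) := by simp only [zpow_zero, zpow_ofNat]; ring
  have e4 : (z ^ 2 : ℂ) = (-1 : ℂ) ^ (0:ℤ) * q ^ (0:ℤ) * w ^ (0:ℤ) * x ^ (0:ℤ) * y ^ (0:ℤ)
      * z ^ (2:ℤ) := by simp only [zpow_zero, zpow_ofNat]; ring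
  rw [qt]
  dsimp only
  rw [e1, e2, e3, e4, cterm_mono hq0, cterm_mono hq0, cterm_mono hq0, cterm_mono hq0,
    mono_mul hq0 hw hx hy hz, mono_mul hq0 hw hx hy hz, mono_mul hq0 hw hx hy hz]
  exact mono_congr (by ring) (by ring) (by ring) (by ring) (by ring) (by ring)

lemma qtB_mono (hq0 : q ≠ 0) (hw : w ≠ 0) (hx : x ≠ 0) (hy : y ≠ 0) (hz : z ≠ 0) (a b c d : ℤ) :
    qt q (x * y * z / w) (w * y * z / x) (w * x * z / y) (w * x * y / z) (a, b, c, d)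
      = mono q w x y z (a + b + c + d)
          ((a ^ 2 - a) + (b ^ 2 - b) + (c ^ 2 - c) + (d ^ 2 - d))
          (-a + b + c + d) (a - b + c + d) (a + b - c + d) (a + b + c - d) := by
  have e1 : (x * y * z / w : ℂ) = (-1 : ℂ) ^ (0:ℤ) * q ^ (0:ℤ) * w ^ (-1:ℤ) * x ^ (1:ℤ)
      * y ^ (1:ℤ) * z ^ (1:ℤ) := by simp only [zpow_zero, zpow_one, zpow_neg_one]; ring
  have e2 : (w * y * z / x : ℂ) = (-1 : ℂ) ^ (0:ℤ) * q ^ (0:ℤ) * w ^ (1:ℤ) * x ^ (-1:ℤ)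
      * y ^ (1:ℤ) * z ^ (1:ℤ) := by simp only [zpow_zero, zpow_one, zpow_neg_one]; ring
  have e3 : (w * x * z / y : ℂ) = (-1 : ℂ) ^ (0:ℤ) * q ^ (0:ℤ) * w ^ (1:ℤ) * x ^ (1:ℤ)
      * y ^ (-1:ℤ) * z ^ (1:ℤ) := by simp only [zpow_zero, zpow_one, zpow_neg_one]; ring
  have e4 : (w * x * y / z : ℂ) = (-1 : ℂ) ^ (0:ℤ) * q ^ (0:ℤ) * w ^ (1:ℤ) * x ^ (1:ℤ)
      * y ^ (1:ℤ) * z ^ (-1:ℤ) := by simp only [zpow_zero, zpow_one, zpow_neg_one]; ring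
  rw [qt]
  dsimp only
  rw [e1, e2, e3, e4, cterm_mono hq0, cterm_mono hq0, cterm_mono hq0, cterm_mono hq0,
    mono_mul hq0 hw hx hy hz, mono_mul hq0 hw hx hy hz, mono_mul hq0 hw hx hy hz]
  exact mono_congr (by ring) (by ring) (by ring) (by ring) (by ring) (by ring)

lemma keyEven (hq0 : q ≠ 0) (hw : w ≠ 0) (hx : x ≠ 0) (hy : y ≠ 0) (hz : z ≠ 0) (a b c d k : ℤ) (h : a + b + c + d = k + k) :
    qt q (x * y * z / w) (w * y * z / x) (w * x * z / y) (w * x * y / z) (a, b, c, d)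
      = qt q (w ^ 2) (x ^ 2) (y ^ 2) (z ^ 2) (k - a, k - b, k - c, k - d) := by
  rw [qtB_mono hq0 hw hx hy hz, qtA_mono hq0 hw hx hy hz]
  have hd : d = k + k - a - b - c := by omega
  subst hd
  exact mono_congr (by ring) (by ring) (by ring) (by ring) (by ring) (by ring)

lemma keyOdd (hq0 : q ≠ 0) (hw : w ≠ 0) (hx : x ≠ 0) (hy : y ≠ 0) (hz : z ≠ 0) (a b c d k : ℤ) (h : a + b + c + d = k + k + 1) :
    q ^ (a + b + c + d) * q⁻¹ * (x * y * z * w)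
        * qt q (x * y * z / w) (w * y * z / x) (w * x * z / y) (w * x * y / z) (a, b, c, d)
      = qt q (w ^ 2) (x ^ 2) (y ^ 2) (z ^ 2) (k + 1 - a, k + 1 - b, k + 1 - c, k + 1 - d) := by
  have hfac : q ^ (a + b + c + d) * q⁻¹ * (x * y * z * w)
      = mono q w x y z 0 (a + b + c + d - 1) 1 1 1 1 := by
    rw [mono, zpow_sub₀ hq0, zpow_zero, zpow_one, zpow_one, zpow_one, zpow_one, zpow_one]
    field_simp
  rw [qtB_mono hq0 hw hx hy hz, hfac, mono_mul hq0 hw hx hy hz, qtA_mono hq0 hw hx hy hz]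
  have hd : d = k + k + 1 - a - b - c := by omega
  subst hd
  exact mono_congr2 (by ring) (by ring) (by ring) (by ring) (by ring) (by ring)

/-! ### Sign and q-shift manipulations for `qt` -/

lemma cterm_neg (u : ℂ) (n : ℤ) : cterm q (-u) n = (-1) ^ n * cterm q u n := by
  rw [cterm, cterm, show (-u) = (-1) * u from by ring, mul_zpow]
  ring

lemma cterm_qmul (u : ℂ) (n : ℤ) : cterm q (q * u) n = q ^ n * cterm q u n := by
  rw [cterm, cterm, mul_zpow]
  ring

lemma qt_neg (u₁ u₂ u₃ u₄ : ℂ) (v : ℤ × ℤ × ℤ × ℤ) :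
    qt q (-u₁) (-u₂) (-u₃) (-u₄) v
      = (-1) ^ (v.1 + v.2.1 + v.2.2.1 + v.2.2.2) * qt q u₁ u₂ u₃ u₄ v := by
  rw [qt, qt, cterm_neg, cterm_neg, cterm_neg, cterm_neg,
    zpow_add₀ (show (-1 : ℂ) ≠ 0 by norm_num), zpow_add₀ (show (-1 : ℂ) ≠ 0 by norm_num),
    zpow_add₀ (show (-1 : ℂ) ≠ 0 by norm_num)]
  ring

lemma qt_qmul (hq0 : q ≠ 0) (u₁ u₂ u₃ u₄ : ℂ) (v : ℤ × ℤ × ℤ × ℤ) :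
    qt q (q * u₁) (q * u₂) (q * u₃) (q * u₄) v
      = q ^ (v.1 + v.2.1 + v.2.2.1 + v.2.2.2) * qt q u₁ u₂ u₃ u₄ v := by
  rw [qt, qt, cterm_qmul, cterm_qmul, cterm_qmul, cterm_qmul,
    zpow_add₀ hq0, zpow_add₀ hq0, zpow_add₀ hq0]
  ring

theorem claimB (hq0 : q ≠ 0) (hq1 : ‖q‖ < 1) (hw : w ≠ 0) (hx : x ≠ 0) (hy : y ≠ 0)
    (hz : z ≠ 0) :
    2 * (Sfun q (w ^ 2) * Sfun q (x ^ 2) * Sfun q (y ^ 2) * Sfun q (z ^ 2))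
      = Sfun q (x * y * z / w) * Sfun q (w * y * z / x) * Sfun q (w * x * z / y)
          * Sfun q (w * x * y / z)
        + Sfun q (-(x * y * z / w)) * Sfun q (-(w * y * z / x)) * Sfun q (-(w * x * z / y))
          * Sfun q (-(w * x * y / z))
        + q⁻¹ * x * y * z * w *
          (Sfun q (q * (x * y * z / w)) * Sfun q (q * (w * y * z / x))
              * Sfun q (q * (w * x * z / y)) * Sfun q (q * (w * x * y / z))
            - Sfun q (-(q * (x * y * z / w))) * Sfun q (-(q * (w * y * z / x)))
              * Sfun q (-(q * (w * x * z / y))) * Sfun q (-(q * (w * x * y / z)))) := by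
  have hxyz := mul_ne_zero (mul_ne_zero hx hy) hz
  have hwyz := mul_ne_zero (mul_ne_zero hw hy) hz
  have hwxz := mul_ne_zero (mul_ne_zero hw hx) hz
  have hwxy := mul_ne_zero (mul_ne_zero hw hx) hy
  have hB1 : (x * y * z / w) ≠ 0 := div_ne_zero hxyz hw
  have hB2 : (w * y * z / x) ≠ 0 := div_ne_zero hwyz hx
  have hB3 : (w * x * z / y) ≠ 0 := div_ne_zero hwxz hy
  have hB4 : (w * x * y / z) ≠ 0 := div_ne_zero hwxy hz
  have hA1 : (w ^ 2 : ℂ) ≠ 0 := pow_ne_zero _ hw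
  have hA2 : (x ^ 2 : ℂ) ≠ 0 := pow_ne_zero _ hx
  have hA3 : (y ^ 2 : ℂ) ≠ 0 := pow_ne_zero _ hy
  have hA4 : (z ^ 2 : ℂ) ≠ 0 := pow_ne_zero _ hz
  have hC1 : (q * (x * y * z / w)) ≠ 0 := mul_ne_zero hq0 hB1
  have hC2 : (q * (w * y * z / x)) ≠ 0 := mul_ne_zero hq0 hB2
  have hC3 : (q * (w * x * z / y)) ≠ 0 := mul_ne_zero hq0 hB3
  have hC4 : (q * (w * x * y / z)) ≠ 0 := mul_ne_zero hq0 hB4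
  rw [qt_tsum hq0 hq1 hA1 hA2 hA3 hA4,
    qt_tsum hq0 hq1 hB1 hB2 hB3 hB4,
    qt_tsum hq0 hq1 (neg_ne_zero.mpr hB1) (neg_ne_zero.mpr hB2) (neg_ne_zero.mpr hB3)
      (neg_ne_zero.mpr hB4),
    qt_tsum hq0 hq1 hC1 hC2 hC3 hC4,
    qt_tsum hq0 hq1 (neg_ne_zero.mpr hC1) (neg_ne_zero.mpr hC2) (neg_ne_zero.mpr hC3)
      (neg_ne_zero.mpr hC4)]
  have sB := summable_qt hq0 hq1 hB1 hB2 hB3 hB4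
  have sB' := summable_qt hq0 hq1 (neg_ne_zero.mpr hB1) (neg_ne_zero.mpr hB2)
    (neg_ne_zero.mpr hB3) (neg_ne_zero.mpr hB4)
  have sC := summable_qt hq0 hq1 hC1 hC2 hC3 hC4
  have sC' := summable_qt hq0 hq1 (neg_ne_zero.mpr hC1) (neg_ne_zero.mpr hC2)
    (neg_ne_zero.mpr hC3) (neg_ne_zero.mpr hC4)
  rw [← Summable.tsum_add sB sB', ← Summable.tsum_sub sC sC', ← tsum_mul_left, ← tsum_mul_left,
    ← Summable.tsum_add (sB.add sB') ((sC.sub sC').mul_left _)]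
  have key : ∀ v : ℤ × ℤ × ℤ × ℤ,
      (qt q (x * y * z / w) (w * y * z / x) (w * x * z / y) (w * x * y / z) v
          + qt q (-(x * y * z / w)) (-(w * y * z / x)) (-(w * x * z / y)) (-(w * x * y / z)) v)
        + q⁻¹ * x * y * z * w *
          (qt q (q * (x * y * z / w)) (q * (w * y * z / x)) (q * (w * x * z / y))
              (q * (w * x * y / z)) v
            - qt q (-(q * (x * y * z / w))) (-(q * (w * y * z / x))) (-(q * (w * x * z / y)))
              (-(q * (w * x * y / z))) v)
      = 2 * qt q (w ^ 2) (x ^ 2) (y ^ 2) (z ^ 2) (phiJ v) := by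
    rintro ⟨a, b, c, d⟩
    rcases Int.even_or_odd (a + b + c + d) with ⟨k, hk⟩ | ⟨k, hk⟩
    · have hphi : phiJ (a, b, c, d) = (k - a, k - b, k - c, k - d) := by
        unfold phiJ
        simp only [Equiv.coe_fn_mk, Prod.mk.injEq]
        omega
      rw [hphi, qt_neg, qt_neg, qt_qmul hq0]
      dsimp only
      have hsign : (-1 : ℂ) ^ (a + b + c + d) = 1 := Even.neg_one_zpow ⟨k, by omega⟩
      rw [hsign]
      have hkey := keyEven hq0 hw hx hy hz a b c d k (by omega)
      linear_combination (2 : ℂ) * hkey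
    · have hphi : phiJ (a, b, c, d) = (k + 1 - a, k + 1 - b, k + 1 - c, k + 1 - d) := by
        unfold phiJ
        simp only [Equiv.coe_fn_mk, Prod.mk.injEq]
        omega
      rw [hphi, qt_neg, qt_neg, qt_qmul hq0]
      dsimp only
      have hsign : (-1 : ℂ) ^ (a + b + c + d) = -1 := Odd.neg_one_zpow ⟨k, by omega⟩
      rw [hsign]
      have hkey := keyOdd hq0 hw hx hy hz a b c d k (by omega)
      linear_combination (2 : ℂ) * hkey
  rw [tsum_congr key]
  exact (Equiv.tsum_eq phiJ (fun u => 2 * qt q (w ^ 2) (x ^ 2) (y ^ 2) (z ^ 2) u)).symm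

end monos

end

end Jacobi5

theorem jacobi_five_term (q w x y z : ℂ) (hq0 : 0 < ‖q‖)
    (hq1 : ‖q‖ < 1) (hw : w ≠ 0) (hx : x ≠ 0) (hy : y ≠ 0) (hz : z ≠ 0) :
    2 * (theta (q ^ 2) (w ^ 2) * theta (q ^ 2) (x ^ 2) * theta (q ^ 2) (y ^ 2)
        * theta (q ^ 2) (z ^ 2))
      = theta (q ^ 2) (x * y * z / w) * theta (q ^ 2) (w * y * z / x)
          * theta (q ^ 2) (w * x * z / y) * theta (q ^ 2) (w * x * y / z)
        + theta (q ^ 2) (-(x * y * z / w)) * theta (q ^ 2) (-(w * y * z / x))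
          * theta (q ^ 2) (-(w * x * z / y)) * theta (q ^ 2) (-(w * x * y / z))
        + q⁻¹ * x * y * z * w *
          (theta (q ^ 2) (q * (x * y * z / w)) * theta (q ^ 2) (q * (w * y * z / x))
              * theta (q ^ 2) (q * (w * x * z / y)) * theta (q ^ 2) (q * (w * x * y / z))
            - theta (q ^ 2) (-(q * (x * y * z / w))) * theta (q ^ 2) (-(q * (w * y * z / x)))
              * theta (q ^ 2) (-(q * (w * x * z / y))) * theta (q ^ 2) (-(q * (w * x * y / z)))) := by
  have hq0' : q ≠ 0 := by
    intro h
    rw [h] at hq0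
    simp at hq0
  have hq1' : ‖q‖ < 1 := by exact hq1
  have hxyz := mul_ne_zero (mul_ne_zero hx hy) hz
  have hwyz := mul_ne_zero (mul_ne_zero hw hy) hz
  have hwxz := mul_ne_zero (mul_ne_zero hw hx) hz
  have hwxy := mul_ne_zero (mul_ne_zero hw hx) hy
  have hB1 : (x * y * z / w) ≠ 0 := div_ne_zero hxyz hw
  have hB2 : (w * y * z / x) ≠ 0 := div_ne_zero hwyz hx
  have hB3 : (w * x * z / y) ≠ 0 := div_ne_zero hwxz hy
  have hB4 : (w * x * y / z) ≠ 0 := div_ne_zero hwxy hz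
  have hC1 : (q * (x * y * z / w)) ≠ 0 := mul_ne_zero hq0' hB1
  have hC2 : (q * (w * y * z / x)) ≠ 0 := mul_ne_zero hq0' hB2
  have hC3 : (q * (w * x * z / y)) ≠ 0 := mul_ne_zero hq0' hB3
  have hC4 : (q * (w * x * y / z)) ≠ 0 := mul_ne_zero hq0' hB4
  rw [Jacobi5.theta_eq hq0' hq1' (pow_ne_zero _ hw),
    Jacobi5.theta_eq hq0' hq1' (pow_ne_zero _ hx),
    Jacobi5.theta_eq hq0' hq1' (pow_ne_zero _ hy),
    Jacobi5.theta_eq hq0' hq1' (pow_ne_zero _ hz),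
    Jacobi5.theta_eq hq0' hq1' hB1, Jacobi5.theta_eq hq0' hq1' hB2,
    Jacobi5.theta_eq hq0' hq1' hB3, Jacobi5.theta_eq hq0' hq1' hB4,
    Jacobi5.theta_eq hq0' hq1' (neg_ne_zero.mpr hB1),
    Jacobi5.theta_eq hq0' hq1' (neg_ne_zero.mpr hB2),
    Jacobi5.theta_eq hq0' hq1' (neg_ne_zero.mpr hB3),
    Jacobi5.theta_eq hq0' hq1' (neg_ne_zero.mpr hB4),
    Jacobi5.theta_eq hq0' hq1' hC1, Jacobi5.theta_eq hq0' hq1' hC2,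
    Jacobi5.theta_eq hq0' hq1' hC3, Jacobi5.theta_eq hq0' hq1' hC4,
    Jacobi5.theta_eq hq0' hq1' (neg_ne_zero.mpr hC1),
    Jacobi5.theta_eq hq0' hq1' (neg_ne_zero.mpr hC2),
    Jacobi5.theta_eq hq0' hq1' (neg_ne_zero.mpr hC3),
    Jacobi5.theta_eq hq0' hq1' (neg_ne_zero.mpr hC4)]
  have hB := Jacobi5.claimB hq0' hq1' hw hx hy hz
  linear_combination ((∏' i : ℕ, ((1 : ℂ) - (q ^ 2) ^ (i + 1)))⁻¹) ^ 4 * hB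
end

section
/- For 0 < |q| < 1 and nonzero complex z: 2·θ(−z⁻²;q²)·θ(q⁻¹z⁻²;q²)·θ(−qz⁻²;q²)·θ(z²;q²) = θ(−1;q²)·θ(q;q²)·θ(−q⁻¹;q²)·θ(z⁻⁴;q²). -/
open Complex Filter

lemma hasProd_zero_of_zero {f : ℕ → ℂ} {b : ℕ} (hb : f b = 0) : HasProd f 0 := by
  have h : ∀ᶠ s in (atTop : Filter (Finset ℕ)), ∏ i ∈ s, f i = (0 : ℂ) := by
    filter_upwards [eventually_ge_atTop {b}] with s hs
    exact Finset.prod_eq_zero (hs (Finset.mem_singleton_self b)) hb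
  exact Tendsto.congr' (h.mono fun s hs => hs.symm) tendsto_const_nhds

noncomputable def Fp (p c : ℂ) : ℂ := ∏' j : ℕ, (1 - p ^ j * c)

lemma summable_log_F {p c : ℂ} (hp : ‖p‖ < 1)
    (h : ∀ j : ℕ, 1 - p ^ j * c ≠ 0) :
    Summable (fun j : ℕ => Complex.log (1 - p ^ j * c)) := by
  have hgeo : Summable (fun j : ℕ => ‖p‖ ^ j * ‖c‖) :=
    (summable_geometric_of_lt_one (norm_nonneg p) hp).mul_right _
  have htend : Tendsto (fun j : ℕ => ‖p‖ ^ j * ‖c‖) atTop (nhds 0) :=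
    hgeo.tendsto_atTop_zero
  have hev : ∀ᶠ j : ℕ in atTop, ‖Complex.log (1 - p ^ j * c)‖ ≤
      (3/2) * (‖p‖ ^ j * ‖c‖) := by
    filter_upwards [htend.eventually_le_const (by norm_num : (0:ℝ) < 1/2)] with j hj
    have habs : ‖-(p ^ j * c)‖ ≤ 1/2 := by
      simpa [norm_mul, norm_pow] using hj
    have := Complex.norm_log_one_add_half_le_self habs
    rw [show (1 : ℂ) + -(p ^ j * c) = 1 - p ^ j * c by ring] at this
    refine this.trans ?_
    simp [norm_mul, norm_pow]
  exact (hgeo.mul_left (3/2)).of_norm_bounded_eventually_nat hev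

lemma multipliable_F {p c : ℂ} (hp : ‖p‖ < 1) :
    Multipliable (fun j : ℕ => 1 - p ^ j * c) := by
  by_cases h : ∀ j : ℕ, 1 - p ^ j * c ≠ 0
  · exact Complex.multipliable_of_summable_log (summable_log_F hp h)
  · push_neg at h
    obtain ⟨j, hj⟩ := h
    exact ⟨0, hasProd_zero_of_zero hj⟩

lemma F_ne_zero {p c : ℂ} (hp : ‖p‖ < 1)
    (h : ∀ j : ℕ, 1 - p ^ j * c ≠ 0) : Fp p c ≠ 0 := by
  have := Complex.cexp_tsum_eq_tprod (f := fun j => 1 - p ^ j * c) h (summable_log_F hp h)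
  have h2 := this
  rw [Fp, ← h2]
  exact Complex.exp_ne_zero _

lemma abs_sq_lt_one {p : ℂ} (hp : ‖p‖ < 1) : ‖p ^ 2‖ < 1 := by
  rw [norm_pow]
  exact pow_lt_one₀ (norm_nonneg _) hp (by norm_num)

lemma F_shift {p c : ℂ} (hp : ‖p‖ < 1) :
    Fp p c = (1 - c) * Fp p (p * c) := by
  have hm : Multipliable (fun n : ℕ => 1 - p ^ (n + 1) * c) :=
    (multipliable_F (p := p) (c := p * c) hp).congr fun k => by ring
  rw [Fp, tprod_eq_zero_mul' (f := fun j : ℕ => 1 - p ^ j * c) hm]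
  congr 1
  · simp
  · exact tprod_congr fun j => by ring

lemma F_pair {p c : ℂ} (hp : ‖p‖ < 1) :
    Fp p c * Fp p (-c) = Fp (p ^ 2) (c ^ 2) := by
  rw [Fp, Fp, ← Multipliable.tprod_mul (multipliable_F hp) (multipliable_F hp), Fp]
  exact tprod_congr fun j => by ring

lemma F_split {p c : ℂ} (hp : ‖p‖ < 1) :
    Fp p c = Fp (p ^ 2) c * Fp (p ^ 2) (p * c) := by
  have hp2 := abs_sq_lt_one hp
  have he : Multipliable (fun k : ℕ => 1 - p ^ (2 * k) * c) :=
    (multipliable_F (p := p ^ 2) (c := c) hp2).congr fun k => by rw [← pow_mul]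
  have ho : Multipliable (fun k : ℕ => 1 - p ^ (2 * k + 1) * c) :=
    (multipliable_F (p := p ^ 2) (c := p * c) hp2).congr fun k => by
      rw [← pow_mul]; ring
  rw [Fp, ← tprod_even_mul_odd (f := fun j : ℕ => 1 - p ^ j * c) he ho, Fp, Fp]
  congr 1
  · exact tprod_congr fun j => by rw [← pow_mul]
  · exact tprod_congr fun j => by rw [← pow_mul]; ring

lemma theta_eq {p w : ℂ} (hp : ‖p‖ < 1) :
    theta p w = Fp p w * Fp p (p * w⁻¹) := by
  rw [theta, Fp, Fp, ← Multipliable.tprod_mul (multipliable_F hp) (multipliable_F hp)]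
  exact tprod_congr fun j => by ring

lemma theta_shift {p w : ℂ} (hp : ‖p‖ < 1) (hp0 : p ≠ 0) (hw : w ≠ 0) :
    theta p (p * w) = -w⁻¹ * theta p w := by
  have h1 : p * (p * w)⁻¹ = w⁻¹ := by
    field_simp
  rw [theta_eq hp, theta_eq hp, h1, F_shift hp (c := w⁻¹), F_shift hp (c := w)]
  have h2 : (1 : ℂ) - w⁻¹ = -w⁻¹ * (1 - w) := by
    field_simp
    ring
  rw [h2]; ring

lemma theta_inv {p w : ℂ} (hp : ‖p‖ < 1) (hw : w ≠ 0) :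
    theta p w⁻¹ = -w⁻¹ * theta p w := by
  rw [theta_eq hp, theta_eq hp, inv_inv, F_shift hp (c := w⁻¹), F_shift hp (c := w)]
  have h2 : (1 : ℂ) - w⁻¹ = -w⁻¹ * (1 - w) := by
    field_simp
    ring
  rw [h2]; ring

lemma theta_split {p w : ℂ} (hp : ‖p‖ < 1) (hp0 : p ≠ 0) :
    theta p w = theta (p ^ 2) w * theta (p ^ 2) (p * w) := by
  have hp2 := abs_sq_lt_one hp
  have e1 : p * (p * w⁻¹) = p ^ 2 * w⁻¹ := by ring
  have e2 : p ^ 2 * (p * w)⁻¹ = p * w⁻¹ := by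
    rw [mul_inv, pow_two, mul_assoc, ← mul_assoc p p⁻¹ w⁻¹, mul_inv_cancel₀ hp0, one_mul]
  rw [theta_eq hp, theta_eq hp2, theta_eq hp2, e2,
    F_split hp (c := w), F_split hp (c := p * w⁻¹), e1]
  ring

lemma theta_pair {p w : ℂ} (hp : ‖p‖ < 1) :
    theta p w * theta p (-w) = theta (p ^ 2) (w ^ 2) := by
  have e1 : p * (-w)⁻¹ = -(p * w⁻¹) := by rw [inv_neg]; ring
  have e2 : p ^ 2 * (w ^ 2)⁻¹ = (p * w⁻¹) ^ 2 := by rw [mul_pow, inv_pow]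
  rw [theta_eq hp, theta_eq hp, theta_eq (abs_sq_lt_one hp), e1, e2,
    ← F_pair hp (c := w), ← F_pair hp (c := p * w⁻¹)]
  ring

lemma euler {x : ℂ} (hx : ‖x‖ < 1) : Fp x (-x) * Fp (x ^ 2) x = 1 := by
  have h1 := F_pair (p := x) (c := x) hx
  have h2 := F_split (p := x) (c := x) hx
  rw [show x * x = x ^ 2 by ring] at h2
  have hne : Fp (x ^ 2) (x ^ 2) ≠ 0 := by
    refine F_ne_zero (abs_sq_lt_one hx) fun j => sub_ne_zero.mpr fun hcon => ?_
    have habs : ‖(x ^ 2) ^ j * x ^ 2‖ = ‖x‖ ^ (2 * j + 2) := by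
      rw [norm_mul, norm_pow, norm_pow, ← pow_mul, ← pow_add]
    have hlt : ‖(x ^ 2) ^ j * x ^ 2‖ < 1 := by
      rw [habs]
      exact pow_lt_one₀ (norm_nonneg _) hx (by omega)
    rw [← hcon] at hlt
    simp at hlt
  apply mul_left_cancel₀ hne
  rw [mul_one]
  symm
  calc Fp (x ^ 2) (x ^ 2)
      = Fp x x * Fp x (-x) := h1.symm
    _ = (Fp (x ^ 2) x * Fp (x ^ 2) (x ^ 2)) * Fp x (-x) := by rw [← h2]
    _ = Fp (x ^ 2) (x ^ 2) * (Fp x (-x) * Fp (x ^ 2) x) := by ring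

lemma theta_const {q : ℂ} (hq0 : q ≠ 0) (hq1 : ‖q‖ < 1) :
    theta (q ^ 2) (-1) * theta (q ^ 2) q * theta (q ^ 2) (-q⁻¹) = 2 * q⁻¹ := by
  have hp := abs_sq_lt_one hq1
  have hq1' : (1 : ℂ) + q ≠ 0 := by
    intro h
    have : q = -1 := by linear_combination h
    rw [this] at hq1
    simp at hq1
  have t1 : theta (q ^ 2) (-1) = 2 * Fp (q ^ 2) (-q ^ 2) ^ 2 := by
    rw [theta_eq hp, show ((q : ℂ) ^ 2) * (-1 : ℂ)⁻¹ = -q ^ 2 by norm_num,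
      F_shift hp (c := (-1 : ℂ)), show ((q : ℂ) ^ 2) * (-1 : ℂ) = -q ^ 2 by ring]
    ring
  have t2 : theta (q ^ 2) q = Fp (q ^ 2) q ^ 2 := by
    rw [theta_eq hp, show (q : ℂ) ^ 2 * q⁻¹ = q by linear_combination q * mul_inv_cancel₀ hq0]
    ring
  have t3 : theta (q ^ 2) (-q⁻¹) = q⁻¹ * Fp (q ^ 2) (-q) ^ 2 := by
    have e1 : (q : ℂ) ^ 2 * (-q⁻¹)⁻¹ = -q ^ 3 := by
      rw [inv_neg, inv_inv]; ring
    have e2 : (q : ℂ) ^ 2 * (-q⁻¹) = -q := by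
      linear_combination (-q) * mul_inv_cancel₀ hq0
    have e3 : (q : ℂ) ^ 2 * (-q) = -q ^ 3 := by ring
    have hs1 : Fp (q ^ 2) (-q⁻¹) = (1 + q⁻¹) * Fp (q ^ 2) (-q) := by
      rw [F_shift hp (c := -q⁻¹), e2]; ring_nf
    have hs2 : Fp (q ^ 2) (-q) = (1 + q) * Fp (q ^ 2) (-q ^ 3) := by
      rw [F_shift hp (c := -q), e3]; ring_nf
    have key : theta (q ^ 2) (-q⁻¹) * (1 + q) = (q⁻¹ * Fp (q ^ 2) (-q) ^ 2) * (1 + q) := by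
      rw [theta_eq hp, e1, hs1]
      calc (1 + q⁻¹) * Fp (q ^ 2) (-q) * Fp (q ^ 2) (-q ^ 3) * (1 + q)
          = (1 + q⁻¹) * Fp (q ^ 2) (-q) * ((1 + q) * Fp (q ^ 2) (-q ^ 3)) := by ring
        _ = (1 + q⁻¹) * Fp (q ^ 2) (-q) * Fp (q ^ 2) (-q) := by rw [← hs2]
        _ = (q⁻¹ * Fp (q ^ 2) (-q) ^ 2) * (1 + q) := by
            have : (1 : ℂ) + q⁻¹ = q⁻¹ * (1 + q) := by
              linear_combination (-1 : ℂ) * inv_mul_cancel₀ hq0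
            rw [this]; ring
    exact mul_right_cancel₀ hq1' key
  have hpair : Fp (q ^ 2) q * Fp (q ^ 2) (-q) = Fp ((q ^ 2) ^ 2) (q ^ 2) :=
    F_pair hp
  have heuler : Fp (q ^ 2) (-q ^ 2) * Fp ((q ^ 2) ^ 2) (q ^ 2) = 1 := by
    have := euler (x := q ^ 2) hp
    rwa [show -(q ^ 2) = -q ^ 2 by ring] at this
  calc theta (q ^ 2) (-1) * theta (q ^ 2) q * theta (q ^ 2) (-q⁻¹)
      = 2 * q⁻¹ * (Fp (q ^ 2) (-q ^ 2) * (Fp (q ^ 2) q * Fp (q ^ 2) (-q))) ^ 2 := by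
        rw [t1, t2, t3]; ring
    _ = 2 * q⁻¹ * (Fp (q ^ 2) (-q ^ 2) * Fp ((q ^ 2) ^ 2) (q ^ 2)) ^ 2 := by rw [hpair]
    _ = 2 * q⁻¹ := by rw [heuler]; ring

theorem theta_degenerate_identity (q z : ℂ) (hq0 : 0 < ‖q‖)
    (hq1 : ‖q‖ < 1) (hz : z ≠ 0) :
    2 * (theta (q ^ 2) (-z⁻¹ ^ 2) * theta (q ^ 2) (q⁻¹ * z⁻¹ ^ 2) * theta (q ^ 2) (-(q * z⁻¹ ^ 2))
        * theta (q ^ 2) (z ^ 2))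
      = theta (q ^ 2) (-1) * theta (q ^ 2) q * theta (q ^ 2) (-q⁻¹) * theta (q ^ 2) (z⁻¹ ^ 4) := by
  have hq : q ≠ 0 := by
    intro h; rw [h] at hq0; simp at hq0
  have hp : ‖q ^ 2‖ < 1 := abs_sq_lt_one hq1
  have hp0 : q ^ 2 ≠ 0 := pow_ne_zero 2 hq
  set u := z ^ 2 with hu
  have hu0 : u ≠ 0 := pow_ne_zero 2 hz
  have e1 : z⁻¹ ^ 2 = u⁻¹ := by rw [inv_pow]
  have e4 : z⁻¹ ^ 4 = u⁻¹ ^ 2 := by rw [inv_pow, inv_pow, ← pow_mul]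
  rw [e1, e4, theta_const hq hq1]
  have hsplit : theta (q ^ 2) (u⁻¹ ^ 2)
      = theta (q ^ 2) u⁻¹ * theta (q ^ 2) (q * u⁻¹)
        * (theta (q ^ 2) (-u⁻¹) * theta (q ^ 2) (-(q * u⁻¹))) := by
    rw [← theta_pair (p := q) (w := u⁻¹) hq1,
      theta_split (p := q) (w := u⁻¹) hq1 hq,
      theta_split (p := q) (w := -u⁻¹) hq1 hq, mul_neg]
  have hiv : theta (q ^ 2) u⁻¹ = -u⁻¹ * theta (q ^ 2) u := theta_inv hp hu0
  have hsh : theta (q ^ 2) (q * u⁻¹) = -(q * u) * theta (q ^ 2) (q⁻¹ * u⁻¹) := by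
    have e5 : q * u⁻¹ = q ^ 2 * (q⁻¹ * u⁻¹) := by
      linear_combination (-q * u⁻¹) * mul_inv_cancel₀ hq
    rw [e5, theta_shift hp hp0 (mul_ne_zero (inv_ne_zero hq) (inv_ne_zero hu0)),
      mul_inv, inv_inv, inv_inv]
  rw [hsplit, hiv, hsh]
  field_simp
end
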